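/- arXiv:2408.13914 — 6 statements merged into one kernel-verified Lean document; each statement's English description precedes it below -/
import Mathlib

section
/- Let ν, σ, m, T, n_w, μ be positive integers and let 𝒜 ∈ ℝ^{ν×σ}, ℬ ∈ ℝ^{ν×m}, 𝒫 ∈ ℝ^{ν×n_w}, U₀ ∈ ℝ^{m×T}, 𝒵₀ ∈ ℝ^{σ×T}, 𝒵₁ ∈ ℝ^{ν×T}, 𝒯 ∈ ℝ^{n_w×n_w}, L ∈ ℝ^{n_w×μ}, M ∈ ℝ^{μ×T} be matrices satisfying the data-consistency relation 𝒵₁ = 𝒜𝒵₀ + ℬU₀ + 𝒫𝒯LM. Suppose K ∈ ℝ^{m×σ} and 𝒢 ∈ ℝ^{T×σ} satisfy U₀𝒢 = K, 𝒵₀𝒢 = I_σ, and M𝒢 = 0. Then 𝒵₁𝒢 = 𝒜 + ℬK. In particular, for every z ∈ ℝ^σ and w ∈ ℝ^{n_w}, 𝒜z + ℬ(Kz) + 𝒫𝒯w = 𝒵₁𝒢 z + 𝒫𝒯w, i.e., the closed-loop vector field of the system ż_state = 𝒜𝒵(z_state) + ℬu + 𝒫w under the feedback u = K𝒵(z_state)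 admits the data-based representation 𝒵₁𝒢 𝒵(z_state) + 𝒫w. -/
/-- **Lemma 2 of the paper (data-dependent closed-loop representation).**
If the data satisfy `𝒵₁ = 𝒜 𝒵₀ + ℬ U₀ + Pm 𝒯 L M` (where `Pm` plays the role of `𝒫`)
and `K, 𝒢` satisfy `U₀ 𝒢 = K`, `𝒵₀ 𝒢 = I`, `M 𝒢 = 0`, then `𝒵₁ 𝒢 = 𝒜 + ℬ K`, and the
closed-loop vector field admits the data-based representation. -/
theorem stmt_3
    (ν σ m T n_w μ : ℕ) (hν : 0 < ν) (hσ : 0 < σ) (hm : 0 < m) (hT : 0 < T)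
    (hnw : 0 < n_w) (hμ : 0 < μ)
    (𝒜 : Matrix (Fin ν) (Fin σ) ℝ) (ℬ : Matrix (Fin ν) (Fin m) ℝ)
    (Pm : Matrix (Fin ν) (Fin n_w) ℝ)
    (U₀ : Matrix (Fin m) (Fin T) ℝ) (𝒵₀ : Matrix (Fin σ) (Fin T) ℝ)
    (𝒵₁ : Matrix (Fin ν) (Fin T) ℝ)
    (𝒯 : Matrix (Fin n_w) (Fin n_w) ℝ) (L : Matrix (Fin n_w) (Fin μ) ℝ)
    (M : Matrix (Fin μ) (Fin T) ℝ)
    (hdata : 𝒵₁ = 𝒜 * 𝒵₀ + ℬ * U₀ + Pm * 𝒯 * L * M)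
    (K : Matrix (Fin m) (Fin σ) ℝ) (𝒢 : Matrix (Fin T) (Fin σ) ℝ)
    (hU : U₀ * 𝒢 = K) (hZ : 𝒵₀ * 𝒢 = 1) (hM : M * 𝒢 = 0) :
    𝒵₁ * 𝒢 = 𝒜 + ℬ * K ∧
      ∀ (z : Fin σ → ℝ) (w : Fin n_w → ℝ),
        𝒜.mulVec z + ℬ.mulVec (K.mulVec z) + (Pm * 𝒯).mulVec w
          = (𝒵₁ * 𝒢).mulVec z + (Pm * 𝒯).mulVec w := by
  have h1 : 𝒵₁ * 𝒢 = 𝒜 + ℬ * K := by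
    rw [hdata, Matrix.add_mul, Matrix.add_mul, Matrix.mul_assoc (𝒜) _ _,
      Matrix.mul_assoc ℬ _ _, Matrix.mul_assoc _ M 𝒢, hM, hU, hZ]
    simp
  refine ⟨h1, fun z w => ?_⟩
  rw [h1, Matrix.add_mulVec, Matrix.mulVec_mulVec]
end

section
/- Let ν, σ, m, T, n_w, μ, d be positive integers and let 𝒜 ∈ ℝ^{ν×σ}, ℬ ∈ ℝ^{ν×m}, 𝒫 ∈ ℝ^{ν×n_w}, U₀ ∈ ℝ^{m×T}, 𝒵₀ ∈ ℝ^{σ×T}, 𝒵₁ ∈ ℝ^{ν×T}, 𝒯 ∈ ℝ^{n_w×n_w}, L ∈ ℝ^{n_w×μ}, M ∈ ℝ^{μ×T} satisfy 𝒵₁ = 𝒜𝒵₀ + ℬU₀ + 𝒫𝒯LM. Let 𝓜 ∈ ℝ^{d×T} be a matrix such that M = C𝓜 for some C ∈ ℝ^{μ×d} (i.e., every row of M lies in the row space of 𝓜). Suppose K ∈ ℝ^{m×σ} and 𝒢 ∈ ℝ^{T×σ} satisfy U₀𝒢 = K, 𝒵₀𝒢 = I_σ, and 𝓜𝒢 =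 0. Then 𝒵₁𝒢 = 𝒜 + ℬK. -/
/-- **Corollary 1 of the paper.** Same as Lemma 2 but with the exogenous-mode matrix `M`
replaced by a reduced matrix `𝓜` whose row space contains the rows of `M`
(i.e. `M = C 𝓜`); the constraint `M 𝒢 = 0` is reduced to `𝓜 𝒢 = 0`. -/
theorem stmt_4
    (ν σ m T n_w μ d : ℕ) (hν : 0 < ν) (hσ : 0 < σ) (hm : 0 < m) (hT : 0 < T)
    (hnw : 0 < n_w) (hμ : 0 < μ) (hd : 0 < d)
    (𝒜 : Matrix (Fin ν) (Fin σ) ℝ) (ℬ : Matrix (Fin ν) (Fin m) ℝ)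
    (Pm : Matrix (Fin ν) (Fin n_w) ℝ)
    (U₀ : Matrix (Fin m) (Fin T) ℝ) (𝒵₀ : Matrix (Fin σ) (Fin T) ℝ)
    (𝒵₁ : Matrix (Fin ν) (Fin T) ℝ)
    (𝒯 : Matrix (Fin n_w) (Fin n_w) ℝ) (L : Matrix (Fin n_w) (Fin μ) ℝ)
    (M : Matrix (Fin μ) (Fin T) ℝ)
    (hdata : 𝒵₁ = 𝒜 * 𝒵₀ + ℬ * U₀ + Pm * 𝒯 * L * M)
    (𝓜 : Matrix (Fin d) (Fin T) ℝ) (C : Matrix (Fin μ) (Fin d) ℝ)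
    (hMC : M = C * 𝓜)
    (K : Matrix (Fin m) (Fin σ) ℝ) (𝒢 : Matrix (Fin T) (Fin σ) ℝ)
    (hU : U₀ * 𝒢 = K) (hZ : 𝒵₀ * 𝒢 = 1) (hM : 𝓜 * 𝒢 = 0) :
    𝒵₁ * 𝒢 = 𝒜 + ℬ * K := by
  subst hdata hMC hU
  simp [Matrix.add_mul, Matrix.mul_assoc, hZ, hM]
end

section
/- Let D > 0, let k be a positive integer, and set ω = k·2π/D. Let φ = [[0, ω], [−ω, 0]] ∈ ℝ^{2×2}, let N ∈ ℝ² be a nonzero vector, and let v : ℝ → ℝ be a continuous D-periodic function. Suppose ζ : ℝ → ℝ² is differentiable, D-periodic (ζ(t+D) = ζ(t) for all t), and satisfies ζ'(t) = φζ(t) + N v(t) for all t ∈ ℝ. Then ∫₀^D cos(ωt) v(t) dt = 0 and ∫₀^D sin(ωt) v(t) dt = 0; equivalently, ∫₀^D e^{iωt} v(t) dt = 0, i.e., the k-th Fourier coefficient of v vanishes. -/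
open Real intervalIntegral

/-- **Part (i) of the Fourier lemma in the appendix of the paper.**
If the harmonic-oscillator block `ζ' = φ ζ + N v` (with `φ = [[0, ω], [−ω, 0]]`,
`ω = k·2π/D`, `N ≠ 0`), driven by a continuous `D`-periodic signal `v`, admits a
differentiable `D`-periodic solution `ζ`, then the `k`-th Fourier coefficient of `v`
vanishes. -/
theorem stmt_5
    (D : ℝ) (hD : 0 < D) (k : ℕ) (hk : 1 ≤ k) (ω : ℝ) (hω : ω = k * (2 * π / D))
    (N : Fin 2 → ℝ) (hN : N ≠ 0)
    (v : ℝ → ℝ) (hv : Continuous v) (hvper : ∀ t, v (t + D) = v t)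
    (ζ : ℝ → Fin 2 → ℝ) (hζper : ∀ t, ζ (t + D) = ζ t)
    (hζ : ∀ t, HasDerivAt ζ ((Matrix.of ![![0, ω], ![-ω, 0]]).mulVec (ζ t) + v t • N) t) :
    ((∫ t in (0:ℝ)..D, Real.cos (ω * t) * v t) = 0 ∧
      (∫ t in (0:ℝ)..D, Real.sin (ω * t) * v t) = 0) ∧
      (∫ t in (0:ℝ)..D, Complex.exp (Complex.I * ω * t) * v t) = 0 := by
  -- component derivatives
  have h0 : ∀ t, HasDerivAt (fun t => ζ t 0) (ω * ζ t 1 + v t * N 0) t := by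
    intro t
    have := hasDerivAt_pi.1 (hζ t) 0
    simpa [Matrix.mulVec, dotProduct, Fin.sum_univ_two] using this
  have h1 : ∀ t, HasDerivAt (fun t => ζ t 1) (-ω * ζ t 0 + v t * N 1) t := by
    intro t
    have := hasDerivAt_pi.1 (hζ t) 1
    simpa [Matrix.mulVec, dotProduct, Fin.sum_univ_two] using this
  set c : ℂ := (N 0 : ℂ) + Complex.I * N 1 with hc
  set z : ℝ → ℂ := fun t => (ζ t 0 : ℂ) + Complex.I * ζ t 1 with hzdef
  have hz : ∀ t : ℝ, HasDerivAt z (-(Complex.I * ω) * z t + c * v t) t := by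
    intro t
    have := ((h0 t).ofReal_comp).add (((h1 t).ofReal_comp).const_mul Complex.I)
    refine HasDerivAt.congr_deriv this ?_
    symm
    simp only [hzdef, hc]
    push_cast
    linear_combination (-(ω * (ζ t 1 : ℂ))) * Complex.I_sq
  set g : ℝ → ℂ := fun t => Complex.exp (Complex.I * ω * t) * z t with hgdef
  have hg : ∀ t : ℝ, HasDerivAt g (Complex.exp (Complex.I * ω * t) * (c * v t)) t := by
    intro t
    have he : HasDerivAt (fun s : ℝ => Complex.exp (Complex.I * ω * s))
        (Complex.I * ω * Complex.exp (Complex.I * ω * t)) t := by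
      have h1' : HasDerivAt (fun s : ℝ => (Complex.I * ω) * (s : ℂ)) (Complex.I * ω) t := by
        simpa using ((hasDerivAt_id t).ofReal_comp).const_mul (Complex.I * ω)
      have := h1'.cexp
      convert this using 1 <;> ring_nf
    have := he.mul (hz t)
    refine HasDerivAt.congr_deriv this ?_
    symm
    ring
  have hcont : Continuous fun t : ℝ => Complex.exp (Complex.I * ω * t) * (c * v t) := by
    fun_prop
  have hint := intervalIntegral.integral_eq_sub_of_hasDerivAt (fun t _ => hg t)
    (hcont.intervalIntegrable 0 D)
  have hexpD : Complex.exp (Complex.I * ω * D) = 1 := by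
    have hωD : ω * D = k * (2 * π) := by
      rw [hω]; field_simp
    have hcast : ((ω * D : ℝ) : ℂ) = ((k * (2 * π) : ℝ) : ℂ) := by exact_mod_cast congrArg (fun x : ℝ => (x : ℂ)) hωD
    have : Complex.I * ω * D = (k : ℤ) * (2 * π * Complex.I) := by
      push_cast at hcast ⊢
      linear_combination Complex.I * hcast
    rw [this, Complex.exp_int_mul_two_pi_mul_I]
  have hgper : g D = g 0 := by
    have hζD : ζ D = ζ 0 := by simpa using hζper 0
    simp [hgdef, hzdef, hζD, hexpD]
  rw [hgper, sub_self] at hint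
  -- factor c
  have hfact : (∫ t in (0:ℝ)..D, Complex.exp (Complex.I * ω * t) * (c * v t))
      = c * ∫ t in (0:ℝ)..D, Complex.exp (Complex.I * ω * t) * v t := by
    rw [← intervalIntegral.integral_const_mul]
    congr 1; funext t; ring
  have hcne : c ≠ 0 := by
    intro h
    apply hN
    have h0' : N 0 = 0 ∧ N 1 = 0 := by
      simpa [hc, Complex.ext_iff] using h
    funext i
    fin_cases i <;> simp [h0'.1, h0'.2]
  have hIzero : (∫ t in (0:ℝ)..D, Complex.exp (Complex.I * ω * t) * v t) = 0 := by
    have := hint.symm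
    rw [hfact] at this
    exact (mul_eq_zero.1 this.symm).resolve_left hcne
  -- split into real parts
  have hsplit : (∫ t in (0:ℝ)..D, Complex.exp (Complex.I * ω * t) * v t)
      = ((∫ t in (0:ℝ)..D, Real.cos (ω * t) * v t : ℝ) : ℂ)
        + ((∫ t in (0:ℝ)..D, Real.sin (ω * t) * v t : ℝ) : ℂ) * Complex.I := by
    have h1' : ∀ t : ℝ, Complex.exp (Complex.I * ω * t) * v t
        = ((Real.cos (ω * t) * v t : ℝ) : ℂ) + ((Real.sin (ω * t) * v t : ℝ) : ℂ) * Complex.I := by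
      intro t
      rw [show Complex.I * ω * t = ((ω * t : ℝ) : ℂ) * Complex.I by push_cast; ring,
        Complex.exp_mul_I]
      push_cast
      ring
    rw [intervalIntegral.integral_congr (fun t _ => h1' t)]
    rw [intervalIntegral.integral_add, intervalIntegral.integral_mul_const,
      intervalIntegral.integral_ofReal, intervalIntegral.integral_ofReal]
    · exact (Continuous.intervalIntegrable (by fun_prop) 0 D)
    · exact (Continuous.intervalIntegrable (by fun_prop) 0 D)
  rw [hsplit] at hIzero
  have hre : (∫ t in (0:ℝ)..D, Real.cos (ω * t) * v t) = 0 ∧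
      (∫ t in (0:ℝ)..D, Real.sin (ω * t) * v t) = 0 := by
    constructor
    · simpa [Complex.ext_iff] using congrArg Complex.re hIzero
    · simpa [Complex.ext_iff] using congrArg Complex.im hIzero
  refine ⟨hre, ?_⟩
  rw [hsplit, hre.1, hre.2]; simp
end

section
/- Let D > 0, let ℓ be a nonnegative integer, and set ω = 2π/D. Define φ ∈ ℝ^{(2ℓ+1)×(2ℓ+1)} as the block-diagonal matrix φ = block.diag(0, φ_1, …, φ_ℓ), where φ_k = [[0, kω], [−kω, 0]] ∈ ℝ^{2×2}, and define Γ ∈ ℝ^{2ℓ+1} as Γ = col(γ, N, …, N) with γ ∈ ℝ \ {0} and N ∈ ℝ² \ {0}. Suppose η : ℝ → ℝ^{2ℓ+1} is differentiable and D-periodic, e : ℝ → ℝ is continuous and D-periodic, and η'(t) = φ η(t) + Γ e(t) for all t ∈ ℝ. Then ∫₀^D e(t) dt = 0, and for every k ∈ {1, …, ℓ}: ∫₀^D cos(kωt) e(t) dt = 0 and ∫₀^D sin(kωt) e(t) dt = 0. That is, the first ℓ+1 Fourier coefficients of e vanish. -/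
open Real

/-- One channel of the internal model of the paper: the `(2ℓ+1) × (2ℓ+1)` block-diagonal
matrix `φ = block.diag(0, φ_1, …, φ_ℓ)` with `φ_k = [[0, kω], [−kω, 0]]`.
Index `0` is the integrator; indices `2k−1, 2k` form the `k`-th oscillator block. -/
noncomputable def intModelPhi (ℓ : ℕ) (ω : ℝ) : Matrix (Fin (2 * ℓ + 1)) (Fin (2 * ℓ + 1)) ℝ :=
  Matrix.of fun i j =>
    if (i : ℕ) = 0 ∨ (j : ℕ) = 0 then 0
    else if ((i : ℕ) + 1) / 2 = ((j : ℕ) + 1) / 2 then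
      if (i : ℕ) % 2 = 1 ∧ (j : ℕ) % 2 = 0 then ((((i : ℕ) + 1) / 2 : ℕ) : ℝ) * ω
      else if (i : ℕ) % 2 = 0 ∧ (j : ℕ) % 2 = 1 then -(((((i : ℕ) + 1) / 2 : ℕ) : ℝ) * ω)
      else 0
    else 0

/-- The input vector `Γ = col(γ, N, …, N) ∈ ℝ^{2ℓ+1}` of one channel of the internal model. -/
def intModelGamma (ℓ : ℕ) (γ : ℝ) (N : Fin 2 → ℝ) : Fin (2 * ℓ + 1) → ℝ :=
  fun i => if (i : ℕ) = 0 then γ else if (i : ℕ) % 2 = 1 then N 0 else N 1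

lemma hasDerivAt_apply' {n : ℕ} (i : Fin n) {f : ℝ → (Fin n → ℝ)} {v : Fin n → ℝ} {t : ℝ}
    (h : HasDerivAt f v t) : HasDerivAt (fun s => f s i) (v i) t := by
  have := ((ContinuousLinearMap.proj i : (Fin n → ℝ) →L[ℝ] ℝ).hasFDerivAt).comp_hasDerivAt t h
  exact hasDerivAt_pi.1 h i

lemma phi_row0 (ℓ : ℕ) (ω : ℝ) (v : Fin (2*ℓ+1) → ℝ) :
    (intModelPhi ℓ ω).mulVec v ⟨0, by omega⟩ = 0 := by
  unfold Matrix.mulVec intModelPhi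
  simp [dotProduct]

lemma phi_row_odd (ℓ k : ℕ) (hk1 : 1 ≤ k) (hk2 : k ≤ ℓ) (ω : ℝ) (v : Fin (2*ℓ+1) → ℝ) :
    (intModelPhi ℓ ω).mulVec v ⟨2*k-1, by omega⟩ = (k*ω) * v ⟨2*k, by omega⟩ := by
  unfold Matrix.mulVec intModelPhi
  rw [dotProduct]
  rw [Finset.sum_eq_single (⟨2*k, by omega⟩ : Fin (2*ℓ+1))]
  · simp only [Matrix.of_apply, Fin.val_mk]
    split_ifs with h1 h2 h3 h4 <;> try (exfalso; omega)
    · have : (2*k-1+1)/2 = k := by omega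
      rw [this]
  · intro j _ hj
    have hjv : (j : ℕ) ≠ 2*k := fun h => hj (Fin.ext h)
    simp only [Matrix.of_apply, Fin.val_mk]
    split_ifs with h1 h2 h3 h4 <;> try ring
    · exfalso; omega
    · exfalso; omega
  · intro h; exact absurd (Finset.mem_univ _) h

lemma phi_row_even (ℓ k : ℕ) (hk1 : 1 ≤ k) (hk2 : k ≤ ℓ) (ω : ℝ) (v : Fin (2*ℓ+1) → ℝ) :
    (intModelPhi ℓ ω).mulVec v ⟨2*k, by omega⟩ = -((k:ℝ)*ω) * v ⟨2*k-1, by omega⟩ := by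
  unfold Matrix.mulVec intModelPhi
  rw [dotProduct]
  rw [Finset.sum_eq_single (⟨2*k-1, by omega⟩ : Fin (2*ℓ+1))]
  · simp only [Matrix.of_apply, Fin.val_mk]
    split_ifs with h1 h2 h3 h4 <;> try (exfalso; omega)
    · have : (2*k+1)/2 = k := by omega
      rw [this]
  · intro j _ hj
    have hjv : (j : ℕ) ≠ 2*k-1 := fun h => hj (Fin.ext h)
    simp only [Matrix.of_apply, Fin.val_mk]
    split_ifs with h1 h2 h3 h4 <;> try ring
    · exfalso; omega
    · exfalso; omega
  · intro h; exact absurd (Finset.mem_univ _) h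


/-- **Key intermediate step of Theorem 1 of the paper.** If the internal-model channel
`η' = φη + Γe` (integrator plus `ℓ` harmonic oscillators at frequencies `kω`, `ω = 2π/D`),
driven by a continuous `D`-periodic error `e`, admits a differentiable `D`-periodic
solution `η`, then the first `ℓ+1` Fourier coefficients of `e` vanish. -/
theorem stmt_8
    (D : ℝ) (hD : 0 < D) (ℓ : ℕ) (ω : ℝ) (hω : ω = 2 * π / D)
    (γ : ℝ) (hγ : γ ≠ 0) (N : Fin 2 → ℝ) (hN : N ≠ 0)
    (e : ℝ → ℝ) (he : Continuous e) (heper : ∀ t, e (t + D) = e t)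
    (η : ℝ → Fin (2 * ℓ + 1) → ℝ) (hηper : ∀ t, η (t + D) = η t)
    (hη : ∀ t, HasDerivAt η
      ((intModelPhi ℓ ω).mulVec (η t) + e t • intModelGamma ℓ γ N) t) :
    (∫ t in (0:ℝ)..D, e t) = 0 ∧
      ∀ k : ℕ, 1 ≤ k → k ≤ ℓ →
        (∫ t in (0:ℝ)..D, Real.cos (k * ω * t) * e t) = 0 ∧
        (∫ t in (0:ℝ)..D, Real.sin (k * ω * t) * e t) = 0 := by
  have hηD : η D = η 0 := by have := hηper 0; simpa using this
  have hωD : ω * D = 2 * π := by rw [hω]; field_simp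
  constructor
  · -- integrator channel
    have h0 : ∀ t, HasDerivAt (fun s => η s (⟨0, by omega⟩ : Fin (2*ℓ+1))) (e t * γ) t := by
      intro t
      have h := hasDerivAt_apply' (⟨0, by omega⟩ : Fin (2*ℓ+1)) (hη t)
      have heq : ((intModelPhi ℓ ω).mulVec (η t) + e t • intModelGamma ℓ γ N)
          (⟨0, by omega⟩ : Fin (2*ℓ+1)) = e t * γ := by
        rw [Pi.add_apply, Pi.smul_apply, phi_row0, smul_eq_mul]
        simp [intModelGamma]
      rw [heq] at h; exact h
    have hint : IntervalIntegrable (fun t => e t * γ) MeasureTheory.volume 0 D :=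
      (he.mul continuous_const).intervalIntegrable _ _
    have hftc : (∫ t in (0:ℝ)..D, e t * γ)
        = η D (⟨0, by omega⟩ : Fin (2*ℓ+1)) - η 0 (⟨0, by omega⟩ : Fin (2*ℓ+1)) :=
      intervalIntegral.integral_eq_sub_of_hasDerivAt (fun t _ => h0 t) hint
    rw [hηD, sub_self] at hftc
    rw [intervalIntegral.integral_mul_const] at hftc
    exact (mul_eq_zero.mp hftc).resolve_right hγ
  · intro k hk1 hk2
    set i1 : Fin (2*ℓ+1) := ⟨2*k-1, by omega⟩ with hi1
    set i2 : Fin (2*ℓ+1) := ⟨2*k, by omega⟩ with hi2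
    have hΓ1 : intModelGamma ℓ γ N i1 = N 0 := by
      simp only [intModelGamma, hi1, Fin.val_mk]
      rw [if_neg (by omega), if_pos (by omega)]
    have hΓ2 : intModelGamma ℓ γ N i2 = N 1 := by
      simp only [intModelGamma, hi2, Fin.val_mk]
      rw [if_neg (by omega), if_neg (by omega)]
    have ha : ∀ t, HasDerivAt (fun s => η s i1) ((k:ℝ)*ω * η t i2 + e t * N 0) t := by
      intro t
      have h := hasDerivAt_apply' i1 (hη t)
      have hp := phi_row_odd ℓ k hk1 hk2 ω (η t)
      rw [← hi1, ← hi2] at hp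
      simpa [hp, hΓ1, smul_eq_mul] using h
    have hb : ∀ t, HasDerivAt (fun s => η s i2) (-((k:ℝ)*ω) * η t i1 + e t * N 1) t := by
      intro t
      have h := hasDerivAt_apply' i2 (hη t)
      have hp := phi_row_even ℓ k hk1 hk2 ω (η t)
      rw [← hi1, ← hi2] at hp
      simpa [hp, hΓ2, smul_eq_mul] using h
    have hlin : ∀ t : ℝ, HasDerivAt (fun s : ℝ => (k:ℝ)*ω*s) ((k:ℝ)*ω) t := by
      intro t
      simpa using (hasDerivAt_id t).const_mul ((k:ℝ)*ω)
    have hc : ∀ t : ℝ, HasDerivAt (fun s : ℝ => Real.cos ((k:ℝ)*ω*s))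
        (-Real.sin ((k:ℝ)*ω*t) * ((k:ℝ)*ω)) t := fun t => (hlin t).cos
    have hs : ∀ t : ℝ, HasDerivAt (fun s : ℝ => Real.sin ((k:ℝ)*ω*s))
        (Real.cos ((k:ℝ)*ω*t) * ((k:ℝ)*ω)) t := fun t => (hlin t).sin
    -- F and G
    have hF : ∀ t, HasDerivAt
        (fun s => Real.cos ((k:ℝ)*ω*s) * η s i1 - Real.sin ((k:ℝ)*ω*s) * η s i2)
        ((N 0 * Real.cos ((k:ℝ)*ω*t) - N 1 * Real.sin ((k:ℝ)*ω*t)) * e t) t := by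
      intro t
      have := ((hc t).mul (ha t)).sub ((hs t).mul (hb t))
      refine this.congr_deriv ?_; ring
    have hG : ∀ t, HasDerivAt
        (fun s => Real.sin ((k:ℝ)*ω*s) * η s i1 + Real.cos ((k:ℝ)*ω*s) * η s i2)
        ((N 0 * Real.sin ((k:ℝ)*ω*t) + N 1 * Real.cos ((k:ℝ)*ω*t)) * e t) t := by
      intro t
      have := ((hs t).mul (ha t)).add ((hc t).mul (hb t))
      refine this.congr_deriv ?_; ring
    have hcosD : Real.cos ((k:ℝ)*ω*D) = 1 := by
      have : (k:ℝ)*ω*D = (k:ℕ) * (2*π) := by rw [mul_assoc, hωD]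
      rw [this, Real.cos_nat_mul_two_pi]
    have hsinD : Real.sin ((k:ℝ)*ω*D) = 0 := by
      have : (k:ℝ)*ω*D = (2*k:ℕ) * π := by push_cast; rw [mul_assoc, hωD]; ring
      rw [this, Real.sin_nat_mul_pi]
    have hcc : Continuous (fun t : ℝ => Real.cos ((k:ℝ)*ω*t)) :=
      Real.continuous_cos.comp (continuous_const.mul continuous_id)
    have hsc : Continuous (fun t : ℝ => Real.sin ((k:ℝ)*ω*t)) :=
      Real.continuous_sin.comp (continuous_const.mul continuous_id)
    have hci : IntervalIntegrable (fun t => Real.cos ((k:ℝ)*ω*t) * e t)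
        MeasureTheory.volume 0 D :=
      (hcc.mul he).intervalIntegrable _ _
    have hsi : IntervalIntegrable (fun t => Real.sin ((k:ℝ)*ω*t) * e t)
        MeasureTheory.volume 0 D :=
      (hsc.mul he).intervalIntegrable _ _
    have hFi : IntervalIntegrable
        (fun t => (N 0 * Real.cos ((k:ℝ)*ω*t) - N 1 * Real.sin ((k:ℝ)*ω*t)) * e t)
        MeasureTheory.volume 0 D := by
      exact (((continuous_const.mul hcc).sub
        (continuous_const.mul hsc)).mul he).intervalIntegrable _ _
    have hGi : IntervalIntegrable
        (fun t => (N 0 * Real.sin ((k:ℝ)*ω*t) + N 1 * Real.cos ((k:ℝ)*ω*t)) * e t)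
        MeasureTheory.volume 0 D := by
      exact (((continuous_const.mul hsc).add
        (continuous_const.mul hcc)).mul he).intervalIntegrable _ _
    set C := ∫ t in (0:ℝ)..D, Real.cos ((k:ℝ)*ω*t) * e t with hC
    set S := ∫ t in (0:ℝ)..D, Real.sin ((k:ℝ)*ω*t) * e t with hS
    have eq1 : N 0 * C - N 1 * S = 0 := by
      have hftc := intervalIntegral.integral_eq_sub_of_hasDerivAt (fun t _ => hF t) hFi
      rw [hηD, hcosD, hsinD] at hftc
      simp at hftc
      calc N 0 * C - N 1 * S
          = ∫ t in (0:ℝ)..D,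
              (N 0 * Real.cos ((k:ℝ)*ω*t) - N 1 * Real.sin ((k:ℝ)*ω*t)) * e t := by
            rw [hC, hS, ← intervalIntegral.integral_const_mul, ← intervalIntegral.integral_const_mul,
              ← intervalIntegral.integral_sub ((hci.const_mul _)) ((hsi.const_mul _))]
            congr 1; ext t; ring
        _ = 0 := hftc
    have eq2 : N 0 * S + N 1 * C = 0 := by
      have hftc := intervalIntegral.integral_eq_sub_of_hasDerivAt (fun t _ => hG t) hGi
      rw [hηD, hcosD, hsinD] at hftc
      simp at hftc
      calc N 0 * S + N 1 * C
          = ∫ t in (0:ℝ)..D,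
              (N 0 * Real.sin ((k:ℝ)*ω*t) + N 1 * Real.cos ((k:ℝ)*ω*t)) * e t := by
            rw [hC, hS, ← intervalIntegral.integral_const_mul, ← intervalIntegral.integral_const_mul,
              ← intervalIntegral.integral_add ((hsi.const_mul _)) ((hci.const_mul _))]
            congr 1; ext t; ring
        _ = 0 := hftc
    have hNsq : N 0 ^ 2 + N 1 ^ 2 ≠ 0 := by
      intro h
      apply hN
      have h0 : N 0 = 0 := by nlinarith [sq_nonneg (N 0), sq_nonneg (N 1)]
      have h1 : N 1 = 0 := by nlinarith [sq_nonneg (N 0), sq_nonneg (N 1)]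
      funext i; fin_cases i <;> simpa [h0, h1]
    have hCz : C = 0 := by
      have : C * (N 0 ^ 2 + N 1 ^ 2) = 0 := by linear_combination N 0 * eq1 + N 1 * eq2
      exact (mul_eq_zero.mp this).resolve_right hNsq
    have hSz : S = 0 := by
      have : S * (N 0 ^ 2 + N 1 ^ 2) = 0 := by linear_combination N 0 * eq2 - N 1 * eq1
      exact (mul_eq_zero.mp this).resolve_right hNsq
    exact ⟨hCz, hSz⟩
end

section
/- Let D > 0, let ℓ be a nonnegative integer, and set ω = 2π/D. Let φ = block.diag(0, φ_1, …, φ_ℓ) ∈ ℝ^{(2ℓ+1)×(2ℓ+1)} with φ_k = [[0, kω], [−kω, 0]], and Γ = col(γ, N, …, N) ∈ ℝ^{2ℓ+1} with γ ∈ ℝ \ {0} and N ∈ ℝ² \ {0}. Suppose η : ℝ → ℝ^{2ℓ+1} is differentiable and D-periodic, e : ℝ → ℝ is continuously differentiable and D-periodic with |e'(t)| ≤ ē for all t ∈ [0, D] for some ē ≥ 0, and η'(t) = φ η(t) + Γ e(t) for all t ∈ ℝ. Then (1/D)∫₀^D e(t)² dt ≤ ē² / ( (2π/D)² (ℓ+1)²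 ). -/
open Real

lemma mulVec_phi_zero (ℓ : ℕ) (ω : ℝ) (x : Fin (2*ℓ+1) → ℝ) :
    (intModelPhi ℓ ω).mulVec x ⟨0, by omega⟩ = 0 := by
  simp [Matrix.mulVec, dotProduct, intModelPhi]

lemma mulVec_phi_odd (ℓ : ℕ) (ω : ℝ) (k : ℕ) (hk : 1 ≤ k) (hkl : k ≤ ℓ)
    (x : Fin (2*ℓ+1) → ℝ) :
    (intModelPhi ℓ ω).mulVec x ⟨2*k-1, by omega⟩ = (k:ℝ) * ω * x ⟨2*k, by omega⟩ := by
  unfold Matrix.mulVec dotProduct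
  rw [Finset.sum_eq_single (⟨2*k, by omega⟩ : Fin (2*ℓ+1))]
  · simp only [intModelPhi, Matrix.of_apply]
    rw [if_neg (by omega), if_pos (by omega), if_pos (by omega)]
    have : ((2*k-1 : ℕ) + 1) / 2 = k := by omega
    rw [this]
  · intro j _ hj
    simp only [intModelPhi, Matrix.of_apply]
    have hjv : (j:ℕ) ≠ 2*k := fun h => hj (Fin.ext h)
    by_cases h0 : (j:ℕ) = 0
    · rw [if_pos (Or.inr h0), zero_mul]
    by_cases hq : ((2*k-1 : ℕ) + 1) / 2 = ((j:ℕ) + 1) / 2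
    · have hj1 : (j:ℕ) = 2*k-1 := by omega
      rw [if_neg (by omega), if_pos (hq),
        if_neg (by omega), if_neg (by omega), zero_mul]
    · rw [if_neg (by omega), if_neg (hq), zero_mul]
  · intro h; exact absurd (Finset.mem_univ _) h

lemma mulVec_phi_even (ℓ : ℕ) (ω : ℝ) (k : ℕ) (hk : 1 ≤ k) (hkl : k ≤ ℓ)
    (x : Fin (2*ℓ+1) → ℝ) :
    (intModelPhi ℓ ω).mulVec x ⟨2*k, by omega⟩ = -((k:ℝ) * ω) * x ⟨2*k-1, by omega⟩ := by
  unfold Matrix.mulVec dotProduct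
  rw [Finset.sum_eq_single (⟨2*k-1, by omega⟩ : Fin (2*ℓ+1))]
  · simp only [intModelPhi, Matrix.of_apply]
    rw [if_neg (by omega), if_pos (by omega), if_neg (by omega), if_pos (by omega)]
    have : ((2*k : ℕ) + 1) / 2 = k := by omega
    rw [this]
  · intro j _ hj
    simp only [intModelPhi, Matrix.of_apply]
    have hjv : (j:ℕ) ≠ 2*k-1 := fun h => hj (Fin.ext h)
    by_cases h0 : (j:ℕ) = 0
    · rw [if_pos (Or.inr h0), zero_mul]
    by_cases hq : ((2*k : ℕ) + 1) / 2 = ((j:ℕ) + 1) / 2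
    · have hj1 : (j:ℕ) = 2*k := by omega
      rw [if_neg (by omega), if_pos hq, if_neg (by omega), if_neg (by omega), zero_mul]
    · rw [if_neg (by omega), if_neg hq, zero_mul]
  · intro h; exact absurd (Finset.mem_univ _) h

lemma osc_integral_eq_zero (D c : ℝ) (m : ℤ) (hcD : c * D = m * (2*π))
    (u v e : ℝ → ℝ) (N0 N1 : ℝ) (hN : ¬ (N0 = 0 ∧ N1 = 0))
    (hec : Continuous e)
    (hu : ∀ t, HasDerivAt u (c * v t + e t * N0) t)
    (hv : ∀ t, HasDerivAt v (-c * u t + e t * N1) t)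
    (huD : u D = u 0) (hvD : v D = v 0) :
    ∫ t in (0:ℝ)..D, Complex.exp ((c:ℂ) * Complex.I * t) * (e t : ℂ) = 0 := by
  set M : ℂ := (N0:ℂ) + (N1:ℂ) * Complex.I with hM
  have hMne : M ≠ 0 := by
    simp only [hM, Complex.ext_iff, Complex.add_re, Complex.add_im, Complex.ofReal_re,
      Complex.ofReal_im, Complex.mul_re, Complex.mul_im, Complex.I_re, Complex.I_im,
      Complex.zero_re, Complex.zero_im, ne_eq]
    intro h
    exact hN ⟨by linarith [h.1], by linarith [h.2]⟩
  set w : ℝ → ℂ := fun t => Complex.exp ((c:ℂ) * Complex.I * t) * ((u t : ℂ) + Complex.I * (v t : ℂ)) with hw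
  have hwderiv : ∀ t : ℝ, HasDerivAt w (Complex.exp ((c:ℂ) * Complex.I * (t:ℂ)) * (e t : ℂ) * M) t := by
    intro t
    have h1 : HasDerivAt (fun t : ℝ => Complex.exp ((c:ℂ) * Complex.I * (t:ℂ)))
        (((c:ℂ) * Complex.I) * Complex.exp ((c:ℂ) * Complex.I * (t:ℂ))) t := by
      have := (((hasDerivAt_id t).ofReal_comp).const_mul ((c:ℂ) * Complex.I)).cexp
      simpa [mul_comm] using this
    have h2 := ((hu t).ofReal_comp).add (((hv t).ofReal_comp).const_mul Complex.I)
    have h3 := h1.mul h2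
    refine h3.congr_deriv ?_
    simp only [Pi.add_apply]
    push_cast
    linear_combination (Complex.exp ((c:ℂ) * Complex.I * (t:ℂ)) * c * (v t)) * Complex.I_sq
  have hcont : Continuous fun t : ℝ => Complex.exp ((c:ℂ) * Complex.I * t) * (e t : ℂ) * M := by
    fun_prop
  have hint : (∫ t in (0:ℝ)..D, Complex.exp ((c:ℂ) * Complex.I * t) * (e t : ℂ) * M) = w D - w 0 :=
    intervalIntegral.integral_eq_sub_of_hasDerivAt (fun t _ => hwderiv t) (hcont.intervalIntegrable _ _)
  have hexpD : Complex.exp ((c:ℂ) * Complex.I * D) = 1 := by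
    have h0 : (c:ℂ) * D = (m:ℂ) * (2*π) := by exact_mod_cast hcD
    rw [show (c:ℂ) * Complex.I * D = (m:ℂ) * (2 * π * Complex.I) by linear_combination Complex.I * h0]
    exact Complex.exp_int_mul_two_pi_mul_I m
  have hwD : w D - w 0 = 0 := by
    simp only [hw, hexpD, huD, hvD, Complex.ofReal_zero, mul_zero, Complex.exp_zero, one_mul]
    ring
  rw [hwD] at hint
  rw [intervalIntegral.integral_mul_const] at hint
  rcases mul_eq_zero.mp hint with h | h
  · exact h
  · exact absurd h hMne

open MeasureTheory in
lemma parseval_aux (D : ℝ) [hD : Fact (0 < D)] (r : ℝ → ℝ) (hr : Continuous r)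
    (hrD : r 0 = r D) :
    Summable (fun n : ℤ => ‖fourierCoeff (AddCircle.liftIco D 0 (fun t => (r t : ℂ))) n‖^2) ∧
    ∑' n : ℤ, ‖fourierCoeff (AddCircle.liftIco D 0 (fun t => (r t : ℂ))) n‖^2
      = (1/D) * ∫ t in (0:ℝ)..D, (r t)^2 := by
  have hDpos := hD.out
  set f : ℝ → ℂ := fun t => (r t : ℂ) with hf
  have hFcont : Continuous (AddCircle.liftIco D 0 f) :=
    AddCircle.liftIco_zero_continuous (by simp [hf, hrD]) (Continuous.continuousOn (by fun_prop))
  set FC : C(AddCircle D, ℂ) := ⟨AddCircle.liftIco D 0 f, hFcont⟩ with hFC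
  set FL := ContinuousMap.toLp (E := ℂ) 2 AddCircle.haarAddCircle ℂ FC with hFL
  have hcoeff : ∀ n : ℤ, fourierCoeff (FL : AddCircle D → ℂ) n
      = fourierCoeff (AddCircle.liftIco D 0 f) n := by
    intro n
    rw [fourierCoeff_toLp]
    rfl
  constructor
  · have h := Memℓp.summable (by norm_num) (lp.memℓp (fourierBasis.repr FL))
    refine h.congr fun n => ?_
    rw [fourierBasis_repr, hcoeff n]
    rw [show (ENNReal.toReal 2) = ((2:ℕ):ℝ) by norm_num, Real.rpow_natCast]
  · have h1 := tsum_sq_fourierCoeff FL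
    simp_rw [hcoeff] at h1
    rw [h1]
    have h2 : (∫ t : AddCircle D, ‖FL t‖^2 ∂AddCircle.haarAddCircle)
        = ∫ t : AddCircle D, ‖AddCircle.liftIco D 0 f t‖^2 ∂AddCircle.haarAddCircle := by
      apply integral_congr_ae
      filter_upwards [ContinuousMap.coeFn_toLp (p := 2) (μ := AddCircle.haarAddCircle) (𝕜 := ℂ) FC] with x hx
      rw [hx]
      rfl
    rw [h2]
    have h3 : (∫ t : AddCircle D, ‖AddCircle.liftIco D 0 f t‖^2 ∂(volume : Measure (AddCircle D)))
        = D * ∫ t : AddCircle D, ‖AddCircle.liftIco D 0 f t‖^2 ∂AddCircle.haarAddCircle := by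
      rw [AddCircle.volume_eq_smul_haarAddCircle, integral_smul_measure,
        ENNReal.toReal_ofReal hDpos.le, smul_eq_mul]
    have h4 : (∫ t in (0:ℝ)..(0+D), ‖AddCircle.liftIco D 0 f (t : AddCircle D)‖^2)
        = ∫ t : AddCircle D, ‖AddCircle.liftIco D 0 f t‖^2 ∂(volume : Measure (AddCircle D)) :=
      AddCircle.intervalIntegral_preimage D 0 (fun b => ‖AddCircle.liftIco D 0 f b‖^2)
    have h5 : (∫ t in (0:ℝ)..(0+D), ‖AddCircle.liftIco D 0 f (t : AddCircle D)‖^2)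
        = ∫ t in (0:ℝ)..D, (r t)^2 := by
      rw [zero_add]
      rw [intervalIntegral.integral_of_le hDpos.le, intervalIntegral.integral_of_le hDpos.le]
      apply integral_congr_ae
      have hae : ∀ᵐ t : ℝ ∂(volume.restrict (Set.Ioc 0 D)), t ∈ Set.Ioo (0:ℝ) D := by
        rw [ae_restrict_iff' measurableSet_Ioc]
        filter_upwards [compl_mem_ae_iff.mpr (volume_singleton (a := D))] with t ht hmem
        exact ⟨hmem.1, lt_of_le_of_ne hmem.2 (by simpa using ht)⟩
      filter_upwards [hae] with t ht
      rw [AddCircle.liftIco_coe_apply (by simp [Set.mem_Ico]; exact ⟨ht.1.le, ht.2⟩)]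
      simp [hf, sq_abs]
    have := h3.symm
    rw [← h4, h5] at this
    rw [← this]
    field_simp
open MeasureTheory
/-- **Quantitative conclusion of Theorem 1 of the paper (componentwise).** If the
internal-model channel `η' = φη + Γe` admits a differentiable `D`-periodic solution
driven by a continuously differentiable `D`-periodic error `e` with `|e'| ≤ ē` on
`[0, D]`, then the mean-square error satisfies
`(1/D)∫₀^D e² ≤ ē² / ((2π/D)² (ℓ+1)²)`. -/
theorem stmt_9
    (D : ℝ) (hD : 0 < D) (ℓ : ℕ) (ω : ℝ) (hω : ω = 2 * π / D)
    (γ : ℝ) (hγ : γ ≠ 0) (N : Fin 2 → ℝ) (hN : N ≠ 0)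
    (e : ℝ → ℝ) (he : ContDiff ℝ 1 e) (heper : ∀ t, e (t + D) = e t)
    (ebar : ℝ) (hebar : 0 ≤ ebar)
    (hebound : ∀ t ∈ Set.Icc (0:ℝ) D, |deriv e t| ≤ ebar)
    (η : ℝ → Fin (2 * ℓ + 1) → ℝ) (hηper : ∀ t, η (t + D) = η t)
    (hη : ∀ t, HasDerivAt η
      ((intModelPhi ℓ ω).mulVec (η t) + e t • intModelGamma ℓ γ N) t) :
    (1 / D) * (∫ t in (0:ℝ)..D, (e t) ^ 2)
      ≤ ebar ^ 2 / ((2 * π / D) ^ 2 * (ℓ + 1) ^ 2) := by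
  have hπ := Real.pi_pos
  have hec : Continuous e := he.continuous
  have hdc : Continuous (deriv e) := he.continuous_deriv le_rfl
  have hηD : η D = η 0 := by simpa using hηper 0
  have heD : e D = e 0 := by simpa using heper 0
  have hcomp : ∀ (i : Fin (2*ℓ+1)) (t : ℝ), HasDerivAt (fun s => η s i)
      ((intModelPhi ℓ ω).mulVec (η t) i + e t * intModelGamma ℓ γ N i) t := by
    intro i t
    have h := (ContinuousLinearMap.proj (R := ℝ) (φ := fun _ : Fin (2*ℓ+1) => ℝ)
      i).hasFDerivAt.comp_hasDerivAt t (hη t)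
    exact (hasDerivAt_pi.mp (hη t)) i
  -- integrator component: mean of e vanishes
  have hint0 : (∫ t in (0:ℝ)..D, e t) = 0 := by
    have h0 : ∀ t : ℝ, HasDerivAt (fun s => η s ⟨0, by omega⟩) (γ * e t) t := by
      intro t
      have := hcomp ⟨0, by omega⟩ t
      rw [mulVec_phi_zero] at this
      simpa [intModelGamma, mul_comm] using this
    have hFTC : (∫ t in (0:ℝ)..D, γ * e t)
        = η D ⟨0, by omega⟩ - η 0 ⟨0, by omega⟩ :=
      intervalIntegral.integral_eq_sub_of_hasDerivAt (fun t _ => h0 t)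
        ((continuous_const.mul hec).intervalIntegrable _ _)
    rw [hηD, sub_self, intervalIntegral.integral_const_mul] at hFTC
    exact (mul_eq_zero.mp hFTC).resolve_left hγ
  -- oscillator components
  have hosc : ∀ k : ℕ, 1 ≤ k → k ≤ ℓ →
      (∫ t in (0:ℝ)..D, Complex.exp ((((k:ℝ) * ω : ℝ):ℂ) * Complex.I * t) * (e t : ℂ)) = 0 := by
    intro k hk1 hk2
    have hNand : ¬ (N 0 = 0 ∧ N 1 = 0) := by
      rintro ⟨h0, h1⟩
      apply hN
      funext i
      fin_cases i <;> simpa [h0, h1]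
    refine osc_integral_eq_zero D ((k:ℝ) * ω) (k:ℤ)
      (by rw [hω]; push_cast; field_simp)
      (fun t => η t ⟨2*k-1, by omega⟩) (fun t => η t ⟨2*k, by omega⟩) e (N 0) (N 1)
      hNand hec ?_ ?_ (by beta_reduce; rw [hηD]) (by beta_reduce; rw [hηD])
    · intro t
      have := hcomp ⟨2*k-1, by omega⟩ t
      rw [mulVec_phi_odd ℓ ω k hk1 hk2] at this
      have hmod : (2*k-1) % 2 = 1 := by omega
      simpa [intModelGamma, hmod, show ¬ (2*k-1 = 0) by omega] using this
    · intro t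
      have := hcomp ⟨2*k, by omega⟩ t
      rw [mulVec_phi_even ℓ ω k hk1 hk2] at this
      have hmod : (2*k) % 2 = 0 := by omega
      simpa [intModelGamma, hmod, show ¬ (2*k = 0) by omega] using this
    -- Fourier setup
  haveI : Fact (0 < D) := ⟨hD⟩
  set f : ℝ → ℂ := fun t => (e t : ℂ) with hfdef
  set g : ℝ → ℂ := fun t => ((deriv e t : ℝ) : ℂ) with hgdef
  have hdper : ∀ t, deriv e (t + D) = deriv e t := by
    intro t
    have heq : (fun s => e (s + D)) = e := by funext s; rw [heper]
    rw [← deriv_comp_add_const, heq]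
  have hab : (0:ℝ) < 0 + D := by linarith
  -- conjugation of interval integrals
  have hconj_int : ∀ h : ℝ → ℂ, (∫ x in (0:ℝ)..D, (starRingEnd ℂ) (h x))
      = (starRingEnd ℂ) (∫ x in (0:ℝ)..D, h x) := by
    intro h
    rw [intervalIntegral.integral_of_le hD.le, intervalIntegral.integral_of_le hD.le,
      integral_conj]
  -- unified vanishing of low-frequency integrals
  have hoscZ : ∀ m : ℤ, m.natAbs ≤ ℓ →
      (∫ t in (0:ℝ)..D, Complex.exp ((m:ℂ) * ω * Complex.I * t) * f t) = 0 := by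
    intro m hm
    rcases lt_trichotomy m 0 with h | h | h
    · -- conjugate of the positive case
      set k : ℕ := (-m).toNat with hk
      have hkm : ((k:ℝ):ℂ) = -(m:ℂ) := by
        have : ((-m).toNat : ℤ) = -m := Int.toNat_of_nonneg (by omega)
        push_cast [hk]
        exact_mod_cast congrArg (fun z : ℤ => (z : ℂ)) this
      have hk1 : 1 ≤ k := by omega
      have hk2 : k ≤ ℓ := by omega
      have hpos := hosc k hk1 hk2
      have hcong : ∀ x : ℝ, Complex.exp ((m:ℂ) * ω * Complex.I * x) * f x
          = (starRingEnd ℂ) (Complex.exp ((((k:ℝ) * ω : ℝ):ℂ) * Complex.I * x) * f x) := by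
        intro x
        rw [map_mul, ← Complex.exp_conj]
        have h1 : (starRingEnd ℂ) (f x) = f x := by simp [hfdef, Complex.conj_ofReal]
        have h2 : (starRingEnd ℂ) ((((k:ℝ) * ω : ℝ):ℂ) * Complex.I * x)
            = (m:ℂ) * ω * Complex.I * x := by
          simp only [map_mul, Complex.conj_I, Complex.conj_ofReal]
          push_cast
          rw [show ((k:ℂ)) = -(m:ℂ) by exact_mod_cast hkm]
          ring
        rw [h1, h2]
      rw [intervalIntegral.integral_congr (fun x _ => hcong x), hconj_int, hpos, map_zero]
    · subst h
      simp only [Int.cast_zero, zero_mul, Complex.exp_zero, one_mul]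
      rw [hfdef]
      rw [intervalIntegral.integral_ofReal, hint0]
      simp
    · set k : ℕ := m.toNat with hk
      have hkm : ((k:ℝ):ℂ) = (m:ℂ) := by
        have : (m.toNat : ℤ) = m := Int.toNat_of_nonneg (by omega)
        push_cast [hk]
        exact_mod_cast congrArg (fun z : ℤ => (z : ℂ)) this
      have hk1 : 1 ≤ k := by omega
      have hk2 : k ≤ ℓ := by omega
      have hpos := hosc k hk1 hk2
      have hcong : ∀ x : ℝ, Complex.exp ((m:ℂ) * ω * Complex.I * x) * f x
          = Complex.exp ((((k:ℝ) * ω : ℝ):ℂ) * Complex.I * x) * f x := by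
        intro x
        congr 1
        push_cast
        rw [show ((k:ℂ)) = (m:ℂ) by exact_mod_cast hkm]
      rw [intervalIntegral.integral_congr (fun x _ => hcong x), hpos]
  -- vanishing of Fourier coefficients up to frequency ℓ
  have hvanish : ∀ n : ℤ, n.natAbs ≤ ℓ → fourierCoeff (AddCircle.liftIco D 0 f) n = 0 := by
    intro n hn
    rw [fourierCoeff_liftIco_eq f n, fourierCoeffOn_eq_integral]
    have hcong : ∀ x : ℝ, (fourier (-n) (x : AddCircle (0 + D - 0))) • f x
        = Complex.exp (((-n : ℤ):ℂ) * ω * Complex.I * x) * f x := by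
      intro x
      rw [fourier_coe_apply, smul_eq_mul]
      congr 1
      push_cast
      rw [hω]
      have hD0 : D ≠ 0 := ne_of_gt hD
      have : ((D:ℂ)) ≠ 0 := by exact_mod_cast hD0
      field_simp
      congr 1
      push_cast
      ring
    rw [intervalIntegral.integral_congr (fun x _ => hcong x)]
    have h0 : (∫ x in (0:ℝ)..0 + D, Complex.exp (((-n : ℤ):ℂ) * ω * Complex.I * x) * f x)
        = ∫ x in (0:ℝ)..D, Complex.exp (((-n : ℤ):ℂ) * ω * Complex.I * x) * f x := by
      rw [zero_add]
    rw [h0, hoscZ (-n) (by simpa using hn), smul_zero]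
  -- the coefficient relation between f and its derivative g
  have hderiv_f : ∀ x ∈ Set.uIcc (0:ℝ) (0 + D), HasDerivAt f (g x) x := fun x _ =>
    ((he.differentiable one_ne_zero).differentiableAt.hasDerivAt).ofReal_comp
  have hg_int : IntervalIntegrable g MeasureTheory.volume 0 (0 + D) := by
    apply Continuous.intervalIntegrable
    fun_prop
  have hrel : ∀ n : ℤ, n ≠ 0 → fourierCoeff (AddCircle.liftIco D 0 f) n
      = (D:ℂ) / (2 * π * Complex.I * n) * fourierCoeff (AddCircle.liftIco D 0 g) n := by
    intro n hn
    rw [fourierCoeff_liftIco_eq f n, fourierCoeff_liftIco_eq g n,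
      fourierCoeffOn_of_hasDerivAt hab hn hderiv_f hg_int]
    have hfD : f (0 + D) - f 0 = 0 := by
      rw [zero_add, hfdef]
      simp [heD]
    rw [hfD, mul_zero, zero_sub]
    have hpi : (π:ℂ) ≠ 0 := by exact_mod_cast ne_of_gt hπ
    have hnC : (n:ℂ) ≠ 0 := Int.cast_ne_zero.mpr hn
    push_cast
    field_simp
    ring
  -- Parseval for f and g
  obtain ⟨hsumF, hparF⟩ := parseval_aux D e hec heD.symm
  obtain ⟨hsumG, hparG⟩ := parseval_aux D (deriv e) hdc (by simpa using (hdper 0).symm)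
  -- termwise bound
  set K : ℝ := (D / (2 * π * ((ℓ:ℝ) + 1)))^2 with hK
  have hKnn : 0 ≤ K := sq_nonneg _
  have hbound : ∀ n : ℤ, ‖fourierCoeff (AddCircle.liftIco D 0 f) n‖^2
      ≤ K * ‖fourierCoeff (AddCircle.liftIco D 0 g) n‖^2 := by
    intro n
    by_cases hn : n.natAbs ≤ ℓ
    · rw [hvanish n hn]
      simp only [ne_eq, norm_zero, zero_pow, OfNat.ofNat_ne_zero, not_false_eq_true]
      exact mul_nonneg hKnn (sq_nonneg _)
    · have hn0 : n ≠ 0 := by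
        intro h; subst h; simp at hn
      have habs : ((ℓ:ℝ) + 1) ≤ |(n:ℝ)| := by
        have h1 : (ℓ + 1 : ℕ) ≤ n.natAbs := by omega
        have h2 : ((n.natAbs : ℝ)) = |(n:ℝ)| := by
          rw [Nat.cast_natAbs, Int.cast_abs]
        rw [← h2]
        exact_mod_cast h1
      rw [hrel n hn0, norm_mul, mul_pow]
      have hnorm : ‖(D:ℂ) / (2 * π * Complex.I * (n:ℂ))‖ = D / (2 * π * |(n:ℝ)|) := by
        rw [norm_div, norm_mul, norm_mul, norm_mul]
        simp [Complex.norm_real, Complex.norm_I, Complex.norm_intCast,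
          abs_of_pos hπ, abs_of_pos hD]
      rw [hnorm, hK]
      have h2 : (0:ℝ) < 2*π*((ℓ:ℝ)+1) := by positivity
      have h3 : 2*π*((ℓ:ℝ)+1) ≤ 2*π*|(n:ℝ)| := by nlinarith
      have h4 : D / (2*π*|(n:ℝ)|) ≤ D / (2*π*((ℓ:ℝ)+1)) := by gcongr
      have h5 := pow_le_pow_left₀ (by positivity) h4 2
      exact mul_le_mul_of_nonneg_right h5 (sq_nonneg _)
  -- bound on the derivative energy
  have hinterm : (1/D) * (∫ t in (0:ℝ)..D, (deriv e t)^2) ≤ ebar^2 := by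
    have h1 : (∫ t in (0:ℝ)..D, (deriv e t)^2) ≤ ∫ t in (0:ℝ)..D, ebar^2 := by
      apply intervalIntegral.integral_mono_on hD.le
      · exact ((hdc.pow 2).intervalIntegrable _ _)
      · exact intervalIntegrable_const
      · intro t ht
        have hb := hebound t ht
        calc (deriv e t)^2 = |deriv e t|^2 := (sq_abs _).symm
          _ ≤ ebar^2 := by nlinarith [abs_nonneg (deriv e t)]
    rw [intervalIntegral.integral_const, smul_eq_mul, sub_zero] at h1
    have hDinv : (0:ℝ) < 1/D := by positivity
    have hcancel : D * (1/D) = 1 := by field_simp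
    nlinarith [mul_le_mul_of_nonneg_left h1 hDinv.le]
  calc (1 / D) * (∫ t in (0:ℝ)..D, (e t)^2)
      = ∑' n : ℤ, ‖fourierCoeff (AddCircle.liftIco D 0 f) n‖^2 := hparF.symm
    _ ≤ ∑' n : ℤ, K * ‖fourierCoeff (AddCircle.liftIco D 0 g) n‖^2 :=
        Summable.tsum_le_tsum hbound hsumF (hsumG.mul_left K)
    _ = K * ∑' n : ℤ, ‖fourierCoeff (AddCircle.liftIco D 0 g) n‖^2 := tsum_mul_left
    _ = K * ((1/D) * ∫ t in (0:ℝ)..D, (deriv e t)^2) := by rw [hparG]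
    _ ≤ K * ebar^2 := mul_le_mul_of_nonneg_left hinterm hKnn
    _ = ebar^2 / ((2*π/D)^2 * ((ℓ:ℝ)+1)^2) := by
        have hpne : π ≠ 0 := ne_of_gt hπ
        have hDne : D ≠ 0 := ne_of_gt hD
        rw [hK]
        field_simp
end

section
/- Let n, m, p, n_w, d, T be positive integers. Let S ∈ ℝ^{n_w×n_w} and s_0, …, s_{d−1} ∈ ℝ satisfy s_0 I + s_1 S + ⋯ + s_{d−1} S^{d−1} + S^d = 0, and assume sup_{t∈ℝ} ‖exp(tS)‖ < ∞. Let A ∈ ℝ^{n×n}, B ∈ ℝ^{n×m}, P ∈ ℝ^{n×n_w}, C_e ∈ ℝ^{p×n}, Q_e ∈ ℝ^{p×n_w}. Define Φ ∈ ℝ^{pd×pd} as the block-companion matrix with blocks Φ_{i,i+1} = I_p for i = 1,…,d−1, last block-row (−s_0 I_p, −s_1 I_p, …, −s_{d−1} I_p), and zeros elsewhere, and G = col(0, …, 0, I_p) ∈ ℝ^{pd×p}. Set 𝒜 = [[A, 0_{n×pd}], [G C_e, Φ]], ℬ = [B; 0_{pd×m}], 𝒫 = [P; G Q_e]. Let U₀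 ∈ ℝ^{m×T}, 𝒵₀ ∈ ℝ^{(n+pd)×T}, 𝒵₁ ∈ ℝ^{(n+pd)×T}, W₀ ∈ ℝ^{n_w×T}, 𝓜 ∈ ℝ^{d×T} satisfy 𝒵₁ = 𝒜𝒵₀ + ℬU₀ + 𝒫W₀ and W₀ = C𝓜 for some C ∈ ℝ^{n_w×d}. Suppose there exist a symmetric positive definite 𝒳 ∈ ℝ^{(n+pd)×(n+pd)} and 𝒴 ∈ ℝ^{T×(n+pd)} with 𝒵₀𝒴 = 𝒳, 𝓜𝒴 = 0, and 𝒵₁𝒴 + (𝒵₁𝒴)ᵀ negative definite, and set K = U₀𝒴𝒳⁻¹ ∈ ℝ^{m×(n+pd)}. Then for every triple of differentiable functions w : ℝ≥0 → ℝ^{n_w}, x : ℝ≥0 → ℝⁿ, η : ℝ≥0 → ℝ^{pd} satisfying ẇ = Sw, ẋ = Ax + B·K·(x,η) + Pw, and η̇ = Φη + G(C_e x + Q_e w), the functions x and η are bounded on [0, ∞) and the regulation error e(t) = C_e x(t) + Q_e w(t) converges to 0 as t → ∞. -/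
open Matrix Filter

section Stmt11Helpers
open NormedSpace

namespace Stmt11Aux

/-- entrywise derivative of `t ↦ exp (t • S)`. -/
lemma exp_entry_hasDerivAt {k : Type*} [Fintype k] [DecidableEq k]
    (S : Matrix k k ℝ) (t : ℝ) (i j : k) :
    HasDerivAt (fun u : ℝ => exp (u • S) i j) ((S * exp (t • S)) i j) t := by
  letI : SeminormedRing (Matrix k k ℝ) := Matrix.linftyOpSemiNormedRing
  letI : NormedRing (Matrix k k ℝ) := Matrix.linftyOpNormedRing
  letI : NormedAlgebra ℝ (Matrix k k ℝ) := Matrix.linftyOpNormedAlgebra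
  have h := hasDerivAt_exp_smul_const' (𝕂 := ℝ) S t
  let L : Matrix k k ℝ →L[ℝ] ℝ :=
    LinearMap.toContinuousLinearMap
      { toFun := fun A => A i j, map_add' := fun _ _ => rfl, map_smul' := fun _ _ => rfl }
  have := L.hasFDerivAt.comp_hasDerivAt t h
  exact this

/-- entrywise derivative of `t ↦ exp ((c*t) • S)`. -/
lemma exp_entry_hasDerivAt' {k : Type*} [Fintype k] [DecidableEq k]
    (S : Matrix k k ℝ) (c t : ℝ) (i j : k) :
    HasDerivAt (fun u : ℝ => exp ((c * u) • S) i j)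
      (c * (S * exp ((c * t) • S)) i j) t := by
  have h1 := exp_entry_hasDerivAt S (c * t) i j
  have h2 : HasDerivAt (fun u : ℝ => c * u) c t := by
    simpa using (hasDerivAt_id t).const_mul c
  have := h1.comp t h2
  rw [mul_comm]
  exact this

lemma exp_smul_commute {k : Type*} [Fintype k] [DecidableEq k]
    (S : Matrix k k ℝ) (t : ℝ) :
    exp (t • S) * S = S * exp (t • S) := by
  letI : SeminormedRing (Matrix k k ℝ) := Matrix.linftyOpSemiNormedRing
  letI : NormedRing (Matrix k k ℝ) := Matrix.linftyOpNormedRing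
  letI : NormedAlgebra ℝ (Matrix k k ℝ) := Matrix.linftyOpNormedAlgebra
  have : Commute (t • S) S := (Commute.refl S).smul_left t
  exact ((this.exp_left).eq)

lemma exp_neg_mul_exp {k : Type*} [Fintype k] [DecidableEq k]
    (S : Matrix k k ℝ) (t : ℝ) :
    exp (t • S) * exp ((-t) • S) = 1 := by
  rw [← Matrix.exp_add_of_commute _ _ (((Commute.refl S).smul_left t).smul_right (-t))]
  simp [← add_smul]

/-- product rule for `mulVec` with time-dependent matrix and vector. -/
lemma hasDerivAt_mulVec {ι κ : Type*} [Fintype ι] [Fintype κ]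
    (A : ℝ → Matrix ι κ ℝ) (A' : Matrix ι κ ℝ) (v : ℝ → κ → ℝ) (v' : κ → ℝ) (t : ℝ)
    (hA : ∀ i j, HasDerivAt (fun s => A s i j) (A' i j) t)
    (hv : HasDerivAt v v' t) :
    HasDerivAt (fun s => (A s).mulVec (v s)) (A'.mulVec (v t) + (A t).mulVec v') t := by
  rw [hasDerivAt_pi]
  intro i
  have hvj : ∀ j, HasDerivAt (fun s => v s j) (v' j) t := fun j => hasDerivAt_pi.1 hv j
  have : HasDerivAt (fun s => ∑ j, A s i j * v s j)
      (∑ j, (A' i j * v t j + A t i j * v' j)) t :=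
    HasDerivAt.fun_sum fun j _ => (hA i j).mul (hvj j)
  simpa [Matrix.mulVec, dotProduct, Finset.sum_add_distrib] using this

/-- product rule for dot products. -/
lemma hasDerivAt_dotProduct {κ : Type*} [Fintype κ]
    (u : ℝ → κ → ℝ) (u' : κ → ℝ) (v : ℝ → κ → ℝ) (v' : κ → ℝ) (t : ℝ)
    (hu : HasDerivAt u u' t) (hv : HasDerivAt v v' t) :
    HasDerivAt (fun s => dotProduct (u s) (v s)) (dotProduct u' (v t) + dotProduct (u t) v') t := by
  have : HasDerivAt (fun s => ∑ j, u s j * v s j)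
      (∑ j, (u' j * v t j + u t j * v' j)) t :=
    HasDerivAt.fun_sum fun j _ => ((hasDerivAt_pi.1 hu j).mul (hasDerivAt_pi.1 hv j))
  simpa [dotProduct, Finset.sum_add_distrib] using this

/-- bound for `mulVec` in the sup norms. -/
lemma norm_mulVec_le {ι κ : Type*} [Fintype ι] [Fintype κ] [Nonempty ι] [Nonempty κ]
    (A : Matrix ι κ ℝ) (v : κ → ℝ) (c : ℝ) (hA : ∀ i j, |A i j| ≤ c) :
    ‖A.mulVec v‖ ≤ (Fintype.card κ : ℝ) * c * ‖v‖ := by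
  rw [pi_norm_le_iff_of_nonneg]
  · intro i
    calc ‖A.mulVec v i‖ = |∑ j, A i j * v j| := rfl
      _ ≤ ∑ j, |A i j * v j| := Finset.abs_sum_le_sum_abs _ _
      _ ≤ ∑ j : κ, c * ‖v‖ := by
          refine Finset.sum_le_sum fun j _ => ?_
          rw [abs_mul]
          exact mul_le_mul (hA i j) (norm_le_pi_norm v j) (abs_nonneg _)
            ((abs_nonneg _).trans (hA i j))
      _ = (Fintype.card κ : ℝ) * c * ‖v‖ := by
          simp [Finset.sum_const, Finset.card_univ, mul_assoc]
  · have hc : (0:ℝ) ≤ c :=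
      (abs_nonneg _).trans (hA (Classical.arbitrary ι) (Classical.arbitrary κ))
    positivity

lemma quadform_continuous {ι : Type*} [Fintype ι] (N : Matrix ι ι ℝ) :
    Continuous (fun z : ι → ℝ => dotProduct z (N.mulVec z)) := by
  unfold dotProduct Matrix.mulVec
  exact continuous_finset_sum _ fun i _ => (continuous_apply i).mul
    (continuous_finset_sum _ fun j _ => continuous_const.mul (continuous_apply j))

lemma quadform_smul {ι : Type*} [Fintype ι] (N : Matrix ι ι ℝ) (a : ℝ) (z : ι → ℝ) :
    dotProduct (a • z) (N.mulVec (a • z)) = a ^ 2 * dotProduct z (N.mulVec z) := by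
  rw [Matrix.mulVec_smul, smul_dotProduct, dotProduct_smul, smul_eq_mul,
    smul_eq_mul]
  ring

/-- a positive definite quadratic form is bounded below by a positive multiple of `‖z‖²`. -/
lemma posdef_lower {ι : Type*} [Fintype ι] [Nonempty ι] {N : Matrix ι ι ℝ}
    (hN : N.PosDef) :
    ∃ c : ℝ, 0 < c ∧ ∀ z : ι → ℝ, c * ‖z‖ ^ 2 ≤ dotProduct z (N.mulVec z) := by
  obtain ⟨u, hu, hmin⟩ := (isCompact_sphere (0 : ι → ℝ) 1).exists_isMinOn
    (NormedSpace.sphere_nonempty.2 zero_le_one) (quadform_continuous N).continuousOn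
  have hu1 : ‖u‖ = 1 := by simpa using mem_sphere_zero_iff_norm.1 hu
  have hu0 : u ≠ 0 := by intro h; rw [h] at hu1; simp at hu1
  refine ⟨dotProduct u (N.mulVec u), by simpa using hN.dotProduct_mulVec_pos hu0, fun z => ?_⟩
  rcases eq_or_ne z 0 with rfl | hz
  · simp
  · have hnz : (0:ℝ) < ‖z‖ := norm_pos_iff.2 hz
    have hmem : ‖z‖⁻¹ • z ∈ Metric.sphere (0 : ι → ℝ) 1 := by
      simp [norm_smul, abs_of_pos (inv_pos.2 hnz), inv_mul_cancel₀ hnz.ne']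
    have := hmin hmem
    have h2 : dotProduct (‖z‖⁻¹ • z) (N.mulVec (‖z‖⁻¹ • z))
        = ‖z‖⁻¹ ^ 2 * dotProduct z (N.mulVec z) := quadform_smul N _ z
    have h3 : dotProduct u (N.mulVec u) ≤ ‖z‖⁻¹ ^ 2 * dotProduct z (N.mulVec z) := by
      rw [← h2]; exact this
    calc dotProduct u (N.mulVec u) * ‖z‖ ^ 2
        ≤ (‖z‖⁻¹ ^ 2 * dotProduct z (N.mulVec z)) * ‖z‖ ^ 2 := by
          exact mul_le_mul_of_nonneg_right h3 (by positivity)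
      _ = dotProduct z (N.mulVec z) := by
          field_simp
  
/-- upper bound of a quadratic form. -/
lemma quadform_upper {ι : Type*} [Fintype ι] (N : Matrix ι ι ℝ) (z : ι → ℝ) :
    dotProduct z (N.mulVec z) ≤ (∑ i, ∑ j, |N i j|) * ‖z‖ ^ 2 := by
  calc dotProduct z (N.mulVec z) = ∑ i, ∑ j, z i * (N i j * z j) := by
        simp [dotProduct, Matrix.mulVec, Finset.mul_sum]
    _ ≤ ∑ i, ∑ j, |N i j| * ‖z‖ ^ 2 := by
        refine Finset.sum_le_sum fun i _ => Finset.sum_le_sum fun j _ => ?_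
        have h1 : z i * (N i j * z j) ≤ |z i * (N i j * z j)| := le_abs_self _
        refine h1.trans ?_
        rw [abs_mul, abs_mul]
        calc |z i| * (|N i j| * |z j|) = |N i j| * (|z i| * |z j|) := by ring
          _ ≤ |N i j| * (‖z‖ * ‖z‖) := by
              refine mul_le_mul_of_nonneg_left ?_ (abs_nonneg _)
              exact mul_le_mul (norm_le_pi_norm z i) (norm_le_pi_norm z j)
                (abs_nonneg _) (norm_nonneg _)
          _ = |N i j| * ‖z‖ ^ 2 := by ring
    _ = (∑ i, ∑ j, |N i j|) * ‖z‖ ^ 2 := by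
        rw [Finset.sum_mul]
        exact Finset.sum_congr rfl fun i _ => (Finset.sum_mul _ _ _).symm

lemma dot_self_transpose {ι : Type*} [Fintype ι] (B : Matrix ι ι ℝ) (u : ι → ℝ) :
    dotProduct u (B.mulVec u) = dotProduct u (Bᵀ.mulVec u) := by
  rw [Matrix.dotProduct_mulVec, ← Matrix.mulVec_transpose, dotProduct_comm]

lemma lyapunov_decay {ι : Type*} [Fintype ι] [DecidableEq ι] [Nonempty ι]
    (M X : Matrix ι ι ℝ) (hX : X.PosDef) (hQ : (-(M * X + X * Mᵀ)).PosDef) :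
    ∃ c β : ℝ, 0 < c ∧ 0 < β ∧ ∀ z : ℝ → ι → ℝ,
      (∀ t, HasDerivAt z (M.mulVec (z t)) t) →
      ∀ t0 t, t0 ≤ t → ‖z t‖ ≤ c * ‖z t0‖ * Real.exp (-β * (t - t0)) := by
  classical
  set Q : Matrix ι ι ℝ := -(M * X + X * Mᵀ) with hQdef
  set Y : Matrix ι ι ℝ := X⁻¹ with hYdef
  have hY : Y.PosDef := hX.inv
  have hdet : IsUnit X.det := (Matrix.isUnit_iff_isUnit_det X).mp hX.isUnit
  have hXY : X * Y = 1 := Matrix.mul_nonsing_inv X hdet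
  have hYX : Y * X = 1 := Matrix.nonsing_inv_mul X hdet
  have hYt : Yᵀ = Y := by
    have := hY.isHermitian.eq
    rwa [Matrix.conjTranspose_eq_transpose_of_trivial] at this
  have hQt : Qᵀ = Q := by
    have := hQ.isHermitian.eq
    rwa [Matrix.conjTranspose_eq_transpose_of_trivial] at this
  set N : Matrix ι ι ℝ := Y * Q * Y with hNdef
  have hNalt : N = -(Y * M + Mᵀ * Y) := by
    have h1 : Y * (M * X + X * Mᵀ) * Y = Y * M * (X * Y) + Y * X * (Mᵀ * Y) := by
      noncomm_ring
    have : N = -(Y * (M * X + X * Mᵀ) * Y) := by rw [hNdef, hQdef]; noncomm_ring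
    rw [this, h1, hXY, hYX, Matrix.mul_one, Matrix.one_mul]
  have hN : N.PosDef := by
    refine Matrix.PosDef.of_dotProduct_mulVec_pos ?_ ?_
    · show Nᴴ = N
      rw [Matrix.conjTranspose_eq_transpose_of_trivial, hNdef,
        Matrix.transpose_mul, Matrix.transpose_mul, hYt, hQt, Matrix.mul_assoc]
    · intro zv hzv
      have hYz : Y.mulVec zv ≠ 0 := by
        intro h
        apply hzv
        have : (X * Y).mulVec zv = zv := by rw [hXY, Matrix.one_mulVec]
        rw [← this, ← Matrix.mulVec_mulVec, h, Matrix.mulVec_zero]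
      have key : dotProduct zv (N.mulVec zv)
          = dotProduct (Y.mulVec zv) (Q.mulVec (Y.mulVec zv)) := by
        rw [hNdef, ← Matrix.mulVec_mulVec, ← Matrix.mulVec_mulVec,
          Matrix.dotProduct_mulVec, ← Matrix.mulVec_transpose, hYt]
      have := hQ.dotProduct_mulVec_pos hYz
      simpa [key] using this
  obtain ⟨c1, hc1, hc1le⟩ := posdef_lower hN
  obtain ⟨cl, hcl, hclle⟩ := posdef_lower hY
  set cu : ℝ := (∑ i, ∑ j, |Y i j|) + 1 with hcudef
  have hcu : 0 < cu := by
    have : (0:ℝ) ≤ ∑ i, ∑ j, |Y i j| :=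
      Finset.sum_nonneg fun i _ => Finset.sum_nonneg fun j _ => abs_nonneg _
    linarith
  have hupper : ∀ zv : ι → ℝ, dotProduct zv (Y.mulVec zv) ≤ cu * ‖zv‖ ^ 2 := by
    intro zv
    refine (quadform_upper Y zv).trans ?_
    have : (0:ℝ) ≤ ‖zv‖ ^ 2 := by positivity
    nlinarith
  set α : ℝ := c1 / cu with hαdef
  have hα : 0 < α := div_pos hc1 hcu
  refine ⟨Real.sqrt (cu / cl), α / 2, Real.sqrt_pos.2 (div_pos hcu hcl), by linarith, ?_⟩
  intro z hz t0 t ht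
  set V : ℝ → ℝ := fun t => dotProduct (z t) (Y.mulVec (z t)) with hVdef
  have hVderiv : ∀ u : ℝ, HasDerivAt V (-(dotProduct (z u) (N.mulVec (z u)))) u := by
    intro u
    have hzY : HasDerivAt (fun s => Y.mulVec (z s)) (Y.mulVec (M.mulVec (z u))) u := by
      have := hasDerivAt_mulVec (fun _ => Y) 0 z (M.mulVec (z u)) u
        (fun i j => hasDerivAt_const u (Y i j)) (hz u)
      simpa using this
    have hdot := hasDerivAt_dotProduct z (M.mulVec (z u)) (fun s => Y.mulVec (z s))
      (Y.mulVec (M.mulVec (z u))) u (hz u) hzY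
    have hval : dotProduct (M.mulVec (z u)) (Y.mulVec (z u))
        + dotProduct (z u) (Y.mulVec (M.mulVec (z u)))
        = -(dotProduct (z u) (N.mulVec (z u))) := by
      have e1 : dotProduct (M.mulVec (z u)) (Y.mulVec (z u))
          = dotProduct (z u) ((Mᵀ * Y).mulVec (z u)) := by
        rw [Matrix.dotProduct_mulVec, ← Matrix.mulVec_transpose, hYt,
          Matrix.mulVec_mulVec, dotProduct_comm, Matrix.dotProduct_mulVec,
          ← Matrix.mulVec_transpose, Matrix.transpose_mul, hYt, dotProduct_comm]
      have e2 : dotProduct (z u) (Y.mulVec (M.mulVec (z u)))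
          = dotProduct (z u) ((Y * M).mulVec (z u)) := by
        rw [Matrix.mulVec_mulVec]
      rw [e1, e2, hNalt]
      simp [Matrix.add_mulVec, Matrix.neg_mulVec, dotProduct_add, dotProduct_neg]
      ring
    rw [← hval]
    exact hdot
  have hVbound : ∀ u : ℝ, -(dotProduct (z u) (N.mulVec (z u))) ≤ -α * V u := by
    intro u
    have h1 : c1 * ‖z u‖ ^ 2 ≤ dotProduct (z u) (N.mulVec (z u)) := hc1le (z u)
    have h2 : V u ≤ cu * ‖z u‖ ^ 2 := hupper (z u)
    have hαcu : α * cu = c1 := by rw [hαdef, div_mul_cancel₀ c1 hcu.ne']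
    nlinarith
  -- g is antitone
  set g : ℝ → ℝ := fun u => V u * Real.exp (α * u) with hgdef
  have hgderiv : ∀ u : ℝ, HasDerivAt g
      (-(dotProduct (z u) (N.mulVec (z u))) * Real.exp (α * u) + V u * (Real.exp (α * u) * α)) u := by
    intro u
    have he : HasDerivAt (fun s : ℝ => Real.exp (α * s)) (Real.exp (α * u) * α) u := by
      have := ((hasDerivAt_id u).const_mul α).exp
      simpa [mul_comm] using this
    exact (hVderiv u).mul he
  have hganti : Antitone g := by
    apply antitone_of_deriv_nonpos
    · exact fun u => (hgderiv u).differentiableAt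
    · intro u
      rw [(hgderiv u).deriv]
      have h1 := hVbound u
      have h2 : (0:ℝ) < Real.exp (α * u) := Real.exp_pos _
      nlinarith
  have hmono := hganti ht
  have hVineq : V t ≤ V t0 * Real.exp (-α * (t - t0)) := by
    have h2 : (0:ℝ) < Real.exp (α * t) := Real.exp_pos _
    have heq : V t0 * Real.exp (-α * (t - t0)) * Real.exp (α * t)
        = V t0 * Real.exp (α * t0) := by
      rw [mul_assoc, ← Real.exp_add]
      congr 1
      ring
    rw [← mul_le_mul_iff_left₀ h2, heq]
    exact hmono
  have hl : cl * ‖z t‖ ^ 2 ≤ V t := hclle (z t)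
  have hu : V t0 ≤ cu * ‖z t0‖ ^ 2 := hupper (z t0)
  have hE : (0:ℝ) < Real.exp (-α * (t - t0)) := Real.exp_pos _
  have hchain : cl * ‖z t‖ ^ 2 ≤ cu * ‖z t0‖ ^ 2 * Real.exp (-α * (t - t0)) :=
    hl.trans (hVineq.trans (mul_le_mul_of_nonneg_right hu hE.le))
  have hsq : ‖z t‖ ^ 2 ≤ (cu / cl) * ‖z t0‖ ^ 2 * Real.exp (-α * (t - t0)) := by
    rw [div_mul_eq_mul_div, div_mul_eq_mul_div, le_div_iff₀ hcl]
    linarith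
  have hRnn : (0:ℝ) ≤ Real.sqrt (cu / cl) * ‖z t0‖ * Real.exp (-(α / 2) * (t - t0)) := by
    positivity
  have hrhs : (Real.sqrt (cu / cl) * ‖z t0‖ * Real.exp (-(α / 2) * (t - t0))) ^ 2
      = (cu / cl) * ‖z t0‖ ^ 2 * Real.exp (-α * (t - t0)) := by
    have h1 : Real.exp (-(α / 2) * (t - t0)) ^ 2 = Real.exp (-α * (t - t0)) := by
      rw [sq, ← Real.exp_add]
      congr 1
      ring
    rw [mul_pow, mul_pow, Real.sq_sqrt (le_of_lt (div_pos hcu hcl)), h1]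
  calc ‖z t‖ = Real.sqrt (‖z t‖ ^ 2) := (Real.sqrt_sq (norm_nonneg _)).symm
    _ ≤ Real.sqrt ((Real.sqrt (cu / cl) * ‖z t0‖ * Real.exp (-(α / 2) * (t - t0))) ^ 2) :=
        Real.sqrt_le_sqrt (by rw [hrhs]; exact hsq)
    _ = Real.sqrt (cu / cl) * ‖z t0‖ * Real.exp (-(α / 2) * (t - t0)) := Real.sqrt_sq hRnn

lemma const_of_hasDerivAt_zero {κ : Type*} [Fintype κ] (f : ℝ → κ → ℝ)
    (hf : ∀ u : ℝ, HasDerivAt f 0 u) (t : ℝ) : f t = f 0 := by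
  apply is_const_of_fderiv_eq_zero (𝕜 := ℝ)
  · exact fun u => ((hf u).differentiableAt)
  · intro u
    have h1 : HasFDerivAt f (ContinuousLinearMap.smulRight (1 : ℝ →L[ℝ] ℝ) (0 : κ → ℝ)) u :=
      (hf u).hasFDerivAt
    rw [h1.fderiv]
    ext v
    simp

lemma exo_repr {κ : Type*} [Fintype κ] [DecidableEq κ] (S : Matrix κ κ ℝ) (w : ℝ → κ → ℝ)
    (hw : ∀ t, HasDerivAt w (S.mulVec (w t)) t) (t : ℝ) :
    w t = (exp (t • S)).mulVec (w 0) := by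
  have key : ∀ u : ℝ, (exp ((-u) • S)).mulVec (w u) = (exp ((-(0:ℝ)) • S)).mulVec (w 0) := by
    intro u
    refine const_of_hasDerivAt_zero (fun u => (exp ((-u) • S)).mulVec (w u)) (fun u => ?_) u
    have hent : ∀ i j, HasDerivAt (fun s : ℝ => exp ((-s) • S) i j)
        (((-1 : ℝ) • (S * exp ((-u) • S))) i j) u := by
      intro i j
      have := exp_entry_hasDerivAt' S (-1) u i j
      simpa [neg_mul, neg_one_mul] using this
    have := hasDerivAt_mulVec (fun s => exp ((-s) • S)) ((-1 : ℝ) • (S * exp ((-u) • S)))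
      w (S.mulVec (w u)) u hent (hw u)
    have hcancel : ((-1 : ℝ) • (S * exp ((-u) • S))).mulVec (w u)
        + (exp ((-u) • S)).mulVec (S.mulVec (w u)) = 0 := by
      rw [Matrix.mulVec_mulVec, ← exp_smul_commute, neg_one_smul,
        Matrix.neg_mulVec, neg_add_cancel]
    rwa [hcancel] at this
  have h0 := key t
  simp only [neg_zero, zero_smul, exp_zero, Matrix.one_mulVec] at h0
  have h2 := congrArg (fun v => (exp (t • S)).mulVec v) h0
  simp only [Matrix.mulVec_mulVec] at h2
  rwa [exp_neg_mul_exp, Matrix.one_mulVec] at h2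


lemma sylvester_solvable {ι κ : Type*} [Fintype ι] [DecidableEq ι] [Nonempty ι]
    [Fintype κ] [DecidableEq κ] [Nonempty κ]
    (M : Matrix ι ι ℝ) (S : Matrix κ κ ℝ)
    (c β : ℝ) (hβ : 0 < β)
    (hdecay : ∀ z : ℝ → ι → ℝ,
      (∀ t, HasDerivAt z (M.mulVec (z t)) t) →
      ∀ t0 t : ℝ, t0 ≤ t → ‖z t‖ ≤ c * ‖z t0‖ * Real.exp (-β * (t - t0)))
    (cS : ℝ) (hS : ∀ t : ℝ, ∀ i j, |exp (t • S) i j| ≤ cS)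
    (R : Matrix ι κ ℝ) : ∃ Z : Matrix ι κ ℝ, Z * S = M * Z + R := by
  classical
  let L : Matrix ι κ ℝ →ₗ[ℝ] Matrix ι κ ℝ :=
    { toFun := fun Z => Z * S - M * Z
      map_add' := fun Z₁ Z₂ => by
        simp only [Matrix.add_mul, Matrix.mul_add]
        abel
      map_smul' := fun a Z => by
        simp [Matrix.smul_mul, Matrix.mul_smul, smul_sub] }
  have hinj : Function.Injective L := by
    rw [injective_iff_map_eq_zero]
    intro Z hZ
    have hZS : Z * S = M * Z := by
      have : Z * S - M * Z = 0 := hZ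
      linear_combination (norm := noncomm_ring) this
    -- for each v, the curve t ↦ (Z * exp (t • S)) *ᵥ v solves ż = M z and is bounded
    have hzero : ∀ v : κ → ℝ, Z.mulVec v = 0 := by
      intro v
      set z : ℝ → ι → ℝ := fun t => (Z * exp (t • S)).mulVec v with hzdef
      have hz : ∀ t, HasDerivAt z (M.mulVec (z t)) t := by
        intro t
        have hent : ∀ i cc, HasDerivAt (fun u => (Z * exp (u • S)) i cc)
            ((M * (Z * exp (t • S))) i cc) t := by
          intro i cc
          have hsum : HasDerivAt (fun u => ∑ j, Z i j * exp (u • S) j cc)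
              (∑ j, Z i j * (S * exp (t • S)) j cc) t :=
            HasDerivAt.fun_sum fun j _ => (exp_entry_hasDerivAt S t j cc).const_mul (Z i j)
          have hEq : (∑ j, Z i j * (S * exp (t • S)) j cc)
              = (M * (Z * exp (t • S))) i cc := by
            have : Z * (S * exp (t • S)) = M * (Z * exp (t • S)) := by
              rw [← Matrix.mul_assoc, hZS, Matrix.mul_assoc]
            calc (∑ j, Z i j * (S * exp (t • S)) j cc)
                = (Z * (S * exp (t • S))) i cc := by rw [Matrix.mul_apply]
              _ = (M * (Z * exp (t • S))) i cc := by rw [this]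
          rw [← hEq]
          simpa only [Matrix.mul_apply] using hsum
        have h2 := hasDerivAt_mulVec (fun u => Z * exp (u • S)) (M * (Z * exp (t • S)))
          (fun _ => v) 0 t hent (hasDerivAt_const t v)
        show HasDerivAt (fun s => (Z * exp (s • S)).mulVec v)
          (M.mulVec ((Z * exp (t • S)).mulVec v)) t
        rw [Matrix.mulVec_mulVec]
        simpa using h2
      -- uniform bound on z
      set cZ : ℝ := (∑ i, ∑ j, |Z i j|) * cS + 1 with hcZdef
      have hcS0 : (0 : ℝ) ≤ cS := (abs_nonneg _).trans (hS 0 (Classical.arbitrary κ) (Classical.arbitrary κ))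
      have hcZ : ∀ t : ℝ, ∀ i cc, |(Z * exp (t • S)) i cc| ≤ cZ := by
        intro t i cc
        rw [Matrix.mul_apply]
        calc |∑ j, Z i j * exp (t • S) j cc| ≤ ∑ j, |Z i j * exp (t • S) j cc| :=
              Finset.abs_sum_le_sum_abs _ _
          _ ≤ ∑ j, |Z i j| * cS := by
              refine Finset.sum_le_sum fun j _ => ?_
              rw [abs_mul]
              exact mul_le_mul_of_nonneg_left (hS t j cc) (abs_nonneg _)
          _ ≤ (∑ i', ∑ j, |Z i' j|) * cS + 1 := by
              rw [← Finset.sum_mul]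
              have h1 : (∑ j, |Z i j|) ≤ ∑ i', ∑ j, |Z i' j| :=
                Finset.single_le_sum (f := fun i' => ∑ j, |Z i' j|)
                  (fun i' _ => Finset.sum_nonneg fun j _ => abs_nonneg _) (Finset.mem_univ i)
              nlinarith
      have hbound : ∀ t : ℝ, ‖z t‖ ≤ (Fintype.card κ : ℝ) * cZ * ‖v‖ := fun t =>
        norm_mulVec_le _ v cZ (hcZ t)
      -- decay from -∞
      have hz0 : ‖z 0‖ ≤ 0 := by
        have hev : ∀ᶠ t0 in atBot, ‖z 0‖ ≤ (|c| * ((Fintype.card κ : ℝ) * cZ * ‖v‖)) * Real.exp (β * t0) := by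
          filter_upwards [eventually_le_atBot (0:ℝ)] with t0 ht0
          have h1 := hdecay z hz t0 0 ht0
          have h2 : Real.exp (-β * (0 - t0)) = Real.exp (β * t0) := by congr 1; ring
          rw [h2] at h1
          refine h1.trans ?_
          have hCv : (0:ℝ) ≤ (Fintype.card κ : ℝ) * cZ * ‖v‖ :=
            (norm_nonneg (z t0)).trans (hbound t0)
          have hkey : c * ‖z t0‖ ≤ |c| * ((Fintype.card κ : ℝ) * cZ * ‖v‖) := by
            nlinarith [le_abs_self c, abs_nonneg c, hbound t0, norm_nonneg (z t0)]
          have := mul_le_mul_of_nonneg_right hkey (le_of_lt (Real.exp_pos (β * t0)))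
          linarith
        have hlim : Tendsto (fun t0 : ℝ => (|c| * ((Fintype.card κ : ℝ) * cZ * ‖v‖)) * Real.exp (β * t0)) atBot (nhds 0) := by
          have h1 : Tendsto (fun t0 : ℝ => β * t0) atBot atBot :=
            (tendsto_const_mul_atBot_of_pos hβ).2 tendsto_id
          have h2 := Real.tendsto_exp_atBot.comp h1
          have := h2.const_mul (|c| * ((Fintype.card κ : ℝ) * cZ * ‖v‖))
          simpa using this
        exact ge_of_tendsto hlim hev
      have : z 0 = 0 := by
        rw [← norm_le_zero_iff]
        exact hz0
      rw [hzdef] at this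
      simpa [exp_zero] using this
    ext i j
    have := congrFun (hzero (Pi.single j 1)) i
    rw [Matrix.mulVec_single] at this
    simpa using this
  have hsurj : Function.Surjective L := by
    rwa [← LinearMap.injective_iff_surjective]
  obtain ⟨Z, hZ⟩ := hsurj R
  refine ⟨Z, ?_⟩
  have : Z * S - M * Z = R := hZ
  linear_combination (norm := noncomm_ring) this


lemma companion_zero {n_w d : ℕ} (hd : 0 < d) (S : Matrix (Fin n_w) (Fin n_w) ℝ)
    (s : Fin d → ℝ)
    (hminpoly : (∑ i : Fin d, s i • S ^ (i : ℕ)) + S ^ d = 0)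
    (ρ : Fin d → Fin n_w → ℝ) (E : Fin n_w → ℝ)
    (hstep : ∀ i : Fin d, ∀ h : (i : ℕ) < d - 1,
      Matrix.vecMul (ρ i) S = ρ ⟨(i : ℕ) + 1, by omega⟩)
    (hlast : Matrix.vecMul (ρ ⟨d - 1, by omega⟩) S = (-∑ j : Fin d, s j • ρ j) + E) :
    E = 0 := by
  have hpow : ∀ k : ℕ, ∀ hk : k < d, ρ ⟨k, hk⟩ = Matrix.vecMul (ρ ⟨0, hd⟩) (S ^ k) := by
    intro k
    induction k with
    | zero => intro hk; simp
    | succ k ih =>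
      intro hk
      have hk' : k < d := by omega
      have hklt : ((⟨k, hk'⟩ : Fin d) : ℕ) < d - 1 := by simp only [Fin.val_mk]; omega
      have := hstep ⟨k, hk'⟩ hklt
      simp only at this
      rw [← this, ih hk', Matrix.vecMul_vecMul, ← pow_succ]
  have hlast' : Matrix.vecMul (ρ ⟨0, hd⟩) (S ^ d) = (-∑ j : Fin d, s j • ρ j) + E := by
    have h1 := hlast
    rw [hpow (d - 1) (by omega), Matrix.vecMul_vecMul, ← pow_succ] at h1
    have hdd : d - 1 + 1 = d := by omega
    rwa [hdd] at h1
  have hsum : Matrix.vecMul (ρ ⟨0, hd⟩) (∑ j : Fin d, s j • S ^ (j : ℕ))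
      = ∑ j : Fin d, s j • Matrix.vecMul (ρ ⟨0, hd⟩) (S ^ (j : ℕ)) := by
    funext c
    simp only [Matrix.vecMul, dotProduct, Matrix.sum_apply, Matrix.smul_apply,
      smul_eq_mul, Pi.smul_apply, Finset.sum_apply, Finset.mul_sum]
    rw [Finset.sum_comm]
    refine Finset.sum_congr rfl fun j _ => Finset.sum_congr rfl fun k _ => by ring
  have hsum' : Matrix.vecMul (ρ ⟨0, hd⟩) (∑ j : Fin d, s j • S ^ (j : ℕ))
      = ∑ j : Fin d, s j • ρ j := by
    rw [hsum]
    refine Finset.sum_congr rfl fun j _ => ?_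
    congr 1
    rw [show j = (⟨(j : ℕ), j.2⟩ : Fin d) from (Fin.eta j j.2).symm, hpow (j : ℕ) j.2]
  have hzero : Matrix.vecMul (ρ ⟨0, hd⟩) ((∑ j : Fin d, s j • S ^ (j : ℕ)) + S ^ d) = 0 := by
    rw [hminpoly, Matrix.vecMul_zero]
  rw [Matrix.vecMul_add, hlast', hsum'] at hzero
  rwa [← add_assoc, add_neg_cancel, zero_add] at hzero

end Stmt11Aux

end Stmt11Helpers

attribute [local instance] Matrix.normedAddCommGroup

set_option maxHeartbeats 1000000 in

/-- **Theorem 2 of the paper, forward direction (data-driven exact linear output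
regulation).** The exosystem matrix `S` is annihilated by the monic polynomial
`s₀ + s₁λ + ⋯ + λ^d` and has bounded matrix exponential (Assumption 1). `(Φ, G)` is
the `p`-copy internal model built from that polynomial, with state indexed by
`Fin d × Fin p` (block row index in `Fin d`). If the data satisfy the consistency
relation and the SDP (29) of the paper is feasible, then the feedback gain
`K = U₀𝒴𝒳⁻¹` solves the output regulation problem: closed-loop solutions are bounded
on `[0, ∞)` and the regulation error `e = C_e x + Q_e w` converges to zero. -/
theorem stmt_11
    (n m p n_w d T : ℕ)
    (hn : 0 < n) (hm : 0 < m) (hp : 0 < p) (hnw : 0 < n_w) (hd : 0 < d) (hT : 0 < T)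
    (S : Matrix (Fin n_w) (Fin n_w) ℝ) (s : Fin d → ℝ)
    (hminpoly : (∑ i : Fin d, s i • S ^ (i : ℕ)) + S ^ d = 0)
    (hSbounded : ∃ c : ℝ, ∀ t : ℝ, ‖NormedSpace.exp (t • S)‖ ≤ c)
    (A : Matrix (Fin n) (Fin n) ℝ) (B : Matrix (Fin n) (Fin m) ℝ)
    (P : Matrix (Fin n) (Fin n_w) ℝ)
    (C_e : Matrix (Fin p) (Fin n) ℝ) (Q_e : Matrix (Fin p) (Fin n_w) ℝ)
    (Φ : Matrix (Fin d × Fin p) (Fin d × Fin p) ℝ)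
    (hΦ : ∀ (i j : Fin d) (a b : Fin p),
      Φ (i, a) (j, b) =
        if a = b then
          (if (i : ℕ) = d - 1 then -s j
           else if (j : ℕ) = (i : ℕ) + 1 then 1 else 0)
        else 0)
    (G : Matrix (Fin d × Fin p) (Fin p) ℝ)
    (hG : ∀ (i : Fin d) (a b : Fin p), G (i, a) b = if (i : ℕ) = d - 1 ∧ a = b then 1 else 0)
    (𝒜 : Matrix (Fin n ⊕ Fin d × Fin p) (Fin n ⊕ Fin d × Fin p) ℝ)
    (h𝒜 : 𝒜 = fromBlocks A 0 (G * C_e) Φ)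
    (ℬ : Matrix (Fin n ⊕ Fin d × Fin p) (Fin m) ℝ)
    (hℬ : ℬ = fromRows B (0 : Matrix (Fin d × Fin p) (Fin m) ℝ))
    (Pm : Matrix (Fin n ⊕ Fin d × Fin p) (Fin n_w) ℝ)
    (hPm : Pm = fromRows P (G * Q_e))
    (U₀ : Matrix (Fin m) (Fin T) ℝ)
    (𝒵₀ 𝒵₁ : Matrix (Fin n ⊕ Fin d × Fin p) (Fin T) ℝ)
    (W₀ : Matrix (Fin n_w) (Fin T) ℝ)
    (hdata : 𝒵₁ = 𝒜 * 𝒵₀ + ℬ * U₀ + Pm * W₀)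
    (𝓜 : Matrix (Fin d) (Fin T) ℝ) (C : Matrix (Fin n_w) (Fin d) ℝ) (hW₀ : W₀ = C * 𝓜)
    (𝒳 : Matrix (Fin n ⊕ Fin d × Fin p) (Fin n ⊕ Fin d × Fin p) ℝ) (h𝒳 : 𝒳.PosDef)
    (𝒴 : Matrix (Fin T) (Fin n ⊕ Fin d × Fin p) ℝ)
    (hSDP1 : 𝒵₀ * 𝒴 = 𝒳) (hSDP2 : 𝓜 * 𝒴 = 0)
    (hSDP3 : (-(𝒵₁ * 𝒴 + (𝒵₁ * 𝒴)ᵀ)).PosDef)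
    (K : Matrix (Fin m) (Fin n ⊕ Fin d × Fin p) ℝ) (hK : K = U₀ * 𝒴 * 𝒳⁻¹) :
    ∀ (w : ℝ → Fin n_w → ℝ) (x : ℝ → Fin n → ℝ) (η : ℝ → Fin d × Fin p → ℝ),
      (∀ t : ℝ, HasDerivAt w (S.mulVec (w t)) t) →
      (∀ t : ℝ, HasDerivAt x
        (A.mulVec (x t) + B.mulVec (K.mulVec (Sum.elim (x t) (η t))) + P.mulVec (w t)) t) →
      (∀ t : ℝ, HasDerivAt η
        (Φ.mulVec (η t) + G.mulVec (C_e.mulVec (x t) + Q_e.mulVec (w t))) t) →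
      (∃ c : ℝ, ∀ t : ℝ, 0 ≤ t → ‖x t‖ ≤ c ∧ ‖η t‖ ≤ c) ∧
        Tendsto (fun t : ℝ => C_e.mulVec (x t) + Q_e.mulVec (w t)) atTop (nhds 0) := by
  classical
  intro w x η hw hx hη
  haveI : NeZero n := ⟨hn.ne'⟩
  haveI : NeZero m := ⟨hm.ne'⟩
  haveI : NeZero p := ⟨hp.ne'⟩
  haveI : NeZero n_w := ⟨hnw.ne'⟩
  haveI : NeZero d := ⟨hd.ne'⟩
  haveI : Nonempty (Fin n ⊕ Fin d × Fin p) := ⟨Sum.inl ⟨0, hn⟩⟩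
  set M : Matrix (Fin n ⊕ Fin d × Fin p) (Fin n ⊕ Fin d × Fin p) ℝ := 𝒜 + ℬ * K with hM
  -- Step 1: Lyapunov inequality for M
  have hdet : IsUnit 𝒳.det := (Matrix.isUnit_iff_isUnit_det 𝒳).mp h𝒳.isUnit
  have hK𝒳 : K * 𝒳 = U₀ * 𝒴 := by
    rw [hK, Matrix.mul_assoc, Matrix.nonsing_inv_mul 𝒳 hdet, Matrix.mul_one]
  have h𝒵₁𝒴 : 𝒵₁ * 𝒴 = M * 𝒳 := by
    rw [hdata, hW₀, hM]
    rw [Matrix.add_mul, Matrix.add_mul, Matrix.add_mul]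
    rw [Matrix.mul_assoc 𝒜 𝒵₀ 𝒴, hSDP1]
    rw [Matrix.mul_assoc ℬ U₀ 𝒴, ← hK𝒳, ← Matrix.mul_assoc ℬ K 𝒳]
    rw [Matrix.mul_assoc Pm (C * 𝓜) 𝒴, Matrix.mul_assoc C 𝓜 𝒴, hSDP2, Matrix.mul_zero,
      Matrix.mul_zero, add_zero]
  have h𝒳t : 𝒳ᵀ = 𝒳 := by
    have := h𝒳.isHermitian.eq
    rwa [Matrix.conjTranspose_eq_transpose_of_trivial] at this
  have hQpos : (-(M * 𝒳 + 𝒳 * Mᵀ)).PosDef := by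
    have heq : 𝒵₁ * 𝒴 + (𝒵₁ * 𝒴)ᵀ = M * 𝒳 + 𝒳 * Mᵀ := by
      rw [h𝒵₁𝒴, Matrix.transpose_mul, h𝒳t]
    rwa [heq] at hSDP3
  obtain ⟨c, β, hc, hβ, hdecay⟩ := Stmt11Aux.lyapunov_decay M 𝒳 h𝒳 hQpos
  -- Step 2: entrywise bound on exp(tS)
  obtain ⟨cS0, hcS0⟩ := hSbounded
  have hSent : ∀ (t : ℝ) (i j : Fin n_w), |NormedSpace.exp (t • S) i j| ≤ cS0 := fun t i j =>
    (Matrix.norm_entry_le_entrywise_sup_norm _).trans (hcS0 t)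
  -- Step 3: Sylvester equation
  obtain ⟨Psol, hPsol⟩ := Stmt11Aux.sylvester_solvable M S c β hβ hdecay cS0 hSent Pm
  -- Step 4: internal model property
  set Psol₁ : Matrix (Fin n) (Fin n_w) ℝ := Matrix.of (fun i j => Psol (Sum.inl i) j) with hPsol₁
  have hE0 : C_e * Psol₁ + Q_e = 0 := by
    -- row computation from the Sylvester equation
    have hrow : ∀ (ii : Fin d) (a : Fin p) (cc : Fin n_w),
        (∑ j, Psol (Sum.inr (ii, a)) j * S j cc)
          = (if (ii : ℕ) = d - 1 then (∑ k, C_e a k * Psol (Sum.inl k) cc) + Q_e a cc else 0)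
            + ∑ jb : Fin d × Fin p, Φ (ii, a) jb * Psol (Sum.inr jb) cc := by
      intro ii a cc
      have h := congrFun (congrFun hPsol (Sum.inr (ii, a))) cc
      rw [Matrix.mul_apply, Matrix.add_apply] at h
      have hMP : (M * Psol) (Sum.inr (ii, a)) cc
          = (if (ii : ℕ) = d - 1 then ∑ k, C_e a k * Psol (Sum.inl k) cc else 0)
            + ∑ jb : Fin d × Fin p, Φ (ii, a) jb * Psol (Sum.inr jb) cc := by
        rw [hM, Matrix.add_mul, Matrix.add_apply]
        have hB0 : (ℬ * K * Psol) (Sum.inr (ii, a)) cc = 0 := by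
          rw [Matrix.mul_assoc, Matrix.mul_apply]
          apply Finset.sum_eq_zero
          intro q _
          rw [hℬ, Matrix.fromRows_apply_inr]
          simp
        rw [hB0, add_zero]
        rw [Matrix.mul_apply, Fintype.sum_sum_type]
        congr 1
        · by_cases hii : (ii : ℕ) = d - 1
          · rw [if_pos hii]
            refine Finset.sum_congr rfl fun k _ => ?_
            congr 1
            rw [h𝒜, Matrix.fromBlocks_apply₂₁, Matrix.mul_apply]
            simp only [hG, hii, true_and, ite_mul, one_mul, zero_mul]
            rw [Finset.sum_ite_eq]
            simp
          · rw [if_neg hii]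
            apply Finset.sum_eq_zero
            intro k _
            rw [h𝒜, Matrix.fromBlocks_apply₂₁, Matrix.mul_apply]
            simp [hG, hii]
        · refine Finset.sum_congr rfl fun jb _ => ?_
          rw [h𝒜, Matrix.fromBlocks_apply₂₂]
      have hPmE : Pm (Sum.inr (ii, a)) cc
          = if (ii : ℕ) = d - 1 then Q_e a cc else 0 := by
        rw [hPm, Matrix.fromRows_apply_inr, Matrix.mul_apply]
        by_cases hii : (ii : ℕ) = d - 1
        · simp only [hG, hii, true_and, ite_mul, one_mul, zero_mul]
          rw [Finset.sum_ite_eq]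
          simp [hii]
        · simp [hG, hii]
      rw [hMP, hPmE] at h
      rw [h]
      by_cases hii : (ii : ℕ) = d - 1 <;> simp [hii] <;> ring
    -- simplify the Φ-sum
    have hΦsum : ∀ (i : Fin d) (a : Fin p) (cc : Fin n_w),
        ∑ jb : Fin d × Fin p, Φ (i, a) jb * Psol (Sum.inr jb) cc
          = ∑ j : Fin d, (if (i : ℕ) = d - 1 then -s j
              else if (j : ℕ) = (i : ℕ) + 1 then 1 else 0) * Psol (Sum.inr (j, a)) cc := by
      intro i a cc
      rw [Fintype.sum_prod_type]
      refine Finset.sum_congr rfl fun j _ => ?_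
      simp only [hΦ, ite_mul, zero_mul]
      rw [Finset.sum_ite_eq]
      simp
    have hE0row : ∀ a : Fin p,
        (fun cc => (∑ k, C_e a k * Psol (Sum.inl k) cc) + Q_e a cc) = 0 := by
      intro a
      refine Stmt11Aux.companion_zero hd S s hminpoly
        (fun i cc => Psol (Sum.inr (i, a)) cc) _ ?_ ?_
      · intro i hi
        funext cc
        have h := hrow i a cc
        have hii : ¬((i : ℕ) = d - 1) := by omega
        rw [if_neg hii, zero_add, hΦsum] at h
        have hstep2 : ∑ j : Fin d, (if (i : ℕ) = d - 1 then -s j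
              else if (j : ℕ) = (i : ℕ) + 1 then 1 else 0) * Psol (Sum.inr (j, a)) cc
            = Psol (Sum.inr ((⟨(i : ℕ) + 1, by omega⟩ : Fin d), a)) cc := by
          simp only [hii, if_false]
          have hcond : ∀ j : Fin d, ((j : ℕ) = (i : ℕ) + 1)
              = (j = (⟨(i : ℕ) + 1, by omega⟩ : Fin d)) := by
            intro j
            simp [Fin.ext_iff]
          simp_rw [hcond, ite_mul, one_mul, zero_mul]
          rw [Finset.sum_ite_eq']
          simp
        rw [hstep2] at h
        have hvm : Matrix.vecMul (fun cc => Psol (Sum.inr (i, a)) cc) S cc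
            = ∑ j, Psol (Sum.inr (i, a)) j * S j cc := by
          simp [Matrix.vecMul, dotProduct]
        rw [hvm, h]
      · funext cc
        have hdd : ((⟨d - 1, by omega⟩ : Fin d) : ℕ) = d - 1 := rfl
        have h := hrow ⟨d - 1, by omega⟩ a cc
        rw [if_pos hdd, hΦsum] at h
        have hvm : Matrix.vecMul (fun cc => Psol (Sum.inr ((⟨d - 1, by omega⟩ : Fin d), a)) cc) S cc
            = ∑ j, Psol (Sum.inr ((⟨d - 1, by omega⟩ : Fin d), a)) j * S j cc := by
          simp [Matrix.vecMul, dotProduct]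
        rw [hvm, h]
        simp only [hdd, if_true, Pi.add_apply, Pi.neg_apply, Finset.sum_apply, Pi.smul_apply,
          smul_eq_mul, neg_mul]
        rw [Finset.sum_neg_distrib]
        ring
    ext a cc
    have h := congrFun (hE0row a) cc
    simp only [Pi.zero_apply] at h ⊢
    rw [Matrix.add_apply, Matrix.mul_apply]
    simpa [hPsol₁, Matrix.of_apply] using h
  -- Step 5: the closed-loop trajectory
  set ξ : ℝ → (Fin n ⊕ Fin d × Fin p) → ℝ := fun t => Sum.elim (x t) (η t) with hξdef
  have hξ : ∀ t, HasDerivAt ξ (M.mulVec (ξ t) + Pm.mulVec (w t)) t := by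
    intro t
    have hcomp : HasDerivAt ξ (Sum.elim
        (A.mulVec (x t) + B.mulVec (K.mulVec (ξ t)) + P.mulVec (w t))
        (Φ.mulVec (η t) + G.mulVec (C_e.mulVec (x t) + Q_e.mulVec (w t)))) t := by
      rw [hasDerivAt_pi]
      rintro (i | q)
      · exact hasDerivAt_pi.1 (hx t) i
      · exact hasDerivAt_pi.1 (hη t) q
    have hval : M.mulVec (ξ t) + Pm.mulVec (w t) = Sum.elim
        (A.mulVec (x t) + B.mulVec (K.mulVec (ξ t)) + P.mulVec (w t))
        (Φ.mulVec (η t) + G.mulVec (C_e.mulVec (x t) + Q_e.mulVec (w t))) := by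
      have h𝒜v : 𝒜.mulVec (ξ t) = Sum.elim (A.mulVec (x t))
          ((G * C_e).mulVec (x t) + Φ.mulVec (η t)) := by
        rw [h𝒜]
        have : ξ t = Sum.elim (x t) (η t) := rfl
        rw [this, Matrix.fromBlocks_mulVec]
        simp [Matrix.zero_mulVec]
      have hℬv : (ℬ * K).mulVec (ξ t) = Sum.elim (B.mulVec (K.mulVec (ξ t))) 0 := by
        rw [← Matrix.mulVec_mulVec, hℬ, Matrix.fromRows_mulVec, Matrix.zero_mulVec]
      have hPmv : Pm.mulVec (w t) = Sum.elim (P.mulVec (w t)) ((G * Q_e).mulVec (w t)) := by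
        rw [hPm, Matrix.fromRows_mulVec]
      rw [hM, Matrix.add_mulVec, h𝒜v, hℬv, hPmv]
      funext l
      cases l with
      | inl i =>
          simp [Matrix.mulVec_add]
      | inr q =>
          simp [Matrix.mulVec_add, ← Matrix.mulVec_mulVec]
          ring
    rw [hval]
    exact hcomp
  set z : ℝ → (Fin n ⊕ Fin d × Fin p) → ℝ := fun t => ξ t - Psol.mulVec (w t) with hzdef
  have hz : ∀ t, HasDerivAt z (M.mulVec (z t)) t := by
    intro t
    have hPw : HasDerivAt (fun u => Psol.mulVec (w u)) (Psol.mulVec (S.mulVec (w t))) t := by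
      have := Stmt11Aux.hasDerivAt_mulVec (fun _ => Psol) 0 w (S.mulVec (w t)) t
        (fun i j => hasDerivAt_const t (Psol i j)) (hw t)
      simpa using this
    have hsub := (hξ t).sub hPw
    have hval : M.mulVec (ξ t) + Pm.mulVec (w t) - Psol.mulVec (S.mulVec (w t))
        = M.mulVec (z t) := by
      have h1 : Psol.mulVec (S.mulVec (w t)) = M.mulVec (Psol.mulVec (w t)) + Pm.mulVec (w t) := by
        rw [Matrix.mulVec_mulVec, hPsol, Matrix.add_mulVec, ← Matrix.mulVec_mulVec]
      rw [h1]
      have h2 : z t = ξ t - Psol.mulVec (w t) := rfl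
      rw [h2, Matrix.mulVec_sub]
      abel
    rw [hval] at hsub
    exact hsub
  -- Step 6: bounds
  have hwbound : ∀ t : ℝ, ‖w t‖ ≤ (n_w : ℝ) * cS0 * ‖w 0‖ := by
    intro t
    rw [Stmt11Aux.exo_repr S w hw t]
    have := Stmt11Aux.norm_mulVec_le (NormedSpace.exp (t • S)) (w 0) cS0 (hSent t)
    simpa using this
  have hzbound : ∀ t : ℝ, 0 ≤ t → ‖z t‖ ≤ c * ‖z 0‖ * Real.exp (-β * t) := by
    intro t ht
    have := hdecay z hz 0 t ht
    simpa using this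
  have hzbound' : ∀ t : ℝ, 0 ≤ t → ‖z t‖ ≤ c * ‖z 0‖ := by
    intro t ht
    refine (hzbound t ht).trans ?_
    have h1 : Real.exp (-β * t) ≤ 1 := by
      rw [Real.exp_le_one_iff]
      nlinarith
    calc c * ‖z 0‖ * Real.exp (-β * t) ≤ c * ‖z 0‖ * 1 :=
          mul_le_mul_of_nonneg_left h1 (mul_nonneg hc.le (norm_nonneg _))
      _ = c * ‖z 0‖ := mul_one _
  constructor
  · -- boundedness
    refine ⟨c * ‖z 0‖ + (n_w : ℝ) * ‖Psol‖ * ((n_w : ℝ) * cS0 * ‖w 0‖), fun t ht => ?_⟩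
    have hξb : ‖ξ t‖ ≤ c * ‖z 0‖ + (n_w : ℝ) * ‖Psol‖ * ((n_w : ℝ) * cS0 * ‖w 0‖) := by
      have h1 : ξ t = z t + Psol.mulVec (w t) := by
        funext l
        simp [hzdef]
      rw [h1]
      refine (norm_add_le _ _).trans ?_
      have h2 := Stmt11Aux.norm_mulVec_le Psol (w t) ‖Psol‖
        (fun i j => by
          rw [← Real.norm_eq_abs]
          exact Matrix.norm_entry_le_entrywise_sup_norm _)
      have h3 : (Fintype.card (Fin n_w) : ℝ) * ‖Psol‖ * ‖w t‖
          ≤ (n_w : ℝ) * ‖Psol‖ * ((n_w : ℝ) * cS0 * ‖w 0‖) := by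
        rw [Fintype.card_fin]
        exact mul_le_mul_of_nonneg_left (hwbound t) (by positivity)
      exact add_le_add (hzbound' t ht) (h2.trans h3)
    constructor
    · refine le_trans ?_ hξb
      rw [pi_norm_le_iff_of_nonneg (norm_nonneg (ξ t))]
      intro i
      exact norm_le_pi_norm (ξ t) (Sum.inl i)
    · refine le_trans ?_ hξb
      rw [pi_norm_le_iff_of_nonneg (norm_nonneg (ξ t))]
      intro q
      exact norm_le_pi_norm (ξ t) (Sum.inr q)
  · -- convergence of the regulation error
    have herr : ∀ t : ℝ, C_e.mulVec (x t) + Q_e.mulVec (w t)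
        = C_e.mulVec (fun i => z t (Sum.inl i)) := by
      intro t
      have hxt : x t = (fun i => z t (Sum.inl i)) + Psol₁.mulVec (w t) := by
        funext i
        have h2 : Psol₁.mulVec (w t) i = Psol.mulVec (w t) (Sum.inl i) := rfl
        have h3 : z t (Sum.inl i) = x t i - Psol.mulVec (w t) (Sum.inl i) := rfl
        simp [h2, h3]
      rw [hxt, Matrix.mulVec_add]
      have h4 : C_e.mulVec (Psol₁.mulVec (w t)) + Q_e.mulVec (w t) = 0 := by
        rw [Matrix.mulVec_mulVec, ← Matrix.add_mulVec, hE0, Matrix.zero_mulVec]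
      calc C_e.mulVec (fun i => z t (Sum.inl i)) + C_e.mulVec (Psol₁.mulVec (w t))
            + Q_e.mulVec (w t)
          = C_e.mulVec (fun i => z t (Sum.inl i))
            + (C_e.mulVec (Psol₁.mulVec (w t)) + Q_e.mulVec (w t)) := by abel
        _ = C_e.mulVec (fun i => z t (Sum.inl i)) := by rw [h4, add_zero]
    set K0 : ℝ := (n : ℝ) * ‖C_e‖ * (c * ‖z 0‖) with hK0
    have hbound : ∀ t : ℝ, 0 ≤ t → ‖C_e.mulVec (x t) + Q_e.mulVec (w t)‖
        ≤ K0 * Real.exp (-β * t) := by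
      intro t ht
      rw [herr t]
      have h1 := Stmt11Aux.norm_mulVec_le C_e (fun i => z t (Sum.inl i)) ‖C_e‖
        (fun i j => by
          rw [← Real.norm_eq_abs]
          exact Matrix.norm_entry_le_entrywise_sup_norm _)
      refine h1.trans ?_
      have h2 : ‖(fun i => z t (Sum.inl i))‖ ≤ ‖z t‖ := by
        rw [pi_norm_le_iff_of_nonneg (norm_nonneg (z t))]
        intro i
        exact norm_le_pi_norm (z t) (Sum.inl i)
      have h3 : ‖(fun i => z t (Sum.inl i))‖ ≤ c * ‖z 0‖ * Real.exp (-β * t) :=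
        h2.trans (hzbound t ht)
      calc (Fintype.card (Fin n) : ℝ) * ‖C_e‖ * ‖(fun i => z t (Sum.inl i))‖
          ≤ (n : ℝ) * ‖C_e‖ * (c * ‖z 0‖ * Real.exp (-β * t)) := by
            rw [Fintype.card_fin]
            exact mul_le_mul_of_nonneg_left h3 (by positivity)
        _ = K0 * Real.exp (-β * t) := by rw [hK0]; ring
    have hg0 : Tendsto (fun t : ℝ => K0 * Real.exp (-β * t)) atTop (nhds 0) := by
      have h1 : Tendsto (fun t : ℝ => β * t) atTop atTop :=
        (tendsto_const_mul_atTop_of_pos hβ).2 tendsto_id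
      have h2 : Tendsto (fun t : ℝ => -β * t) atTop atBot := by
        have h2a : (fun t : ℝ => -β * t) = fun t : ℝ => -(β * t) := by
          funext t
          ring
        rw [h2a]
        exact tendsto_neg_atTop_atBot.comp h1
      have h3 := Real.tendsto_exp_atBot.comp h2
      have h4 := h3.const_mul K0
      simpa using h4
    refine squeeze_zero_norm' ?_ hg0
    filter_upwards [eventually_ge_atTop (0 : ℝ)] with t ht
    exact hbound t ht
end
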